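/- arXiv:1412.6700 — 7 statements merged into one kernel-verified Lean document; each statement's English description precedes it below -/
import Mathlib

section
/- Suppose the characteristic exponent ψ is real-valued (ψ(ξ) ∈ ℝ for all ξ ∈ ℝ^d). Then for all λ > 0, t > 0 and κ > 0, the exponential negative moment is infinite: E e^{λ|X_t|^{-κ}} = ∫ e^{λ|x|^{-κ}} μ_t(dx) = ∞. -/
open MeasureTheory Filter Set
open scoped ENNReal Classical

set_option maxHeartbeats 3000000 in
/-- for a real-valued characteristic exponent, exponential negative
moments are infinite.  (The integrand is `∞` at `x = 0`, matching
`e^{λ·|0|^{-κ}} = e^∞ = ∞`.) -/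
theorem levy_exponential_negative_moment_infinite
    (d : ℕ) (hd : 1 ≤ d)
    (ℓ : EuclideanSpace ℝ (Fin d))
    (Q : EuclideanSpace ℝ (Fin d) →ₗ[ℝ] EuclideanSpace ℝ (Fin d))
    (hQsymm : ∀ ξ η, (inner ℝ (Q ξ) η : ℝ) = (inner ℝ ξ (Q η) : ℝ))
    (hQpos : ∀ ξ, 0 ≤ (inner ℝ ξ (Q ξ) : ℝ))
    (ν : Measure (EuclideanSpace ℝ (Fin d)))
    (hν0 : ν {0} = 0)
    (hν : ∫⁻ y, ENNReal.ofReal (min 1 (‖y‖ ^ 2)) ∂ν < ⊤)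
    (ψ : EuclideanSpace ℝ (Fin d) → ℂ)
    (hψ : ∀ ξ, ψ ξ = -Complex.I * ((inner ℝ ℓ ξ : ℝ) : ℂ)
        + (((1 / 2 : ℝ) * (inner ℝ ξ (Q ξ) : ℝ) : ℝ) : ℂ)
        + ∫ y, ((1 : ℂ) - Complex.exp (Complex.I * ((inner ℝ ξ y : ℝ) : ℂ))
            + Complex.I * ((Set.indicator {y : EuclideanSpace ℝ (Fin d) | y ≠ 0 ∧ ‖y‖ < 1}
                (fun y => (inner ℝ ξ y : ℝ)) y : ℝ) : ℂ)) ∂ν)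
    (μ : ℝ → Measure (EuclideanSpace ℝ (Fin d)))
    (hμ : ∀ t > 0, IsProbabilityMeasure (μ t))
    (hchar : ∀ t > 0, ∀ ξ, ∫ x, Complex.exp (Complex.I * ((inner ℝ ξ x : ℝ) : ℂ)) ∂(μ t)
        = Complex.exp (-(t : ℂ) * ψ ξ))
    (hreal : ∀ ξ, (ψ ξ).im = 0) :
    ∀ l : ℝ, 0 < l → ∀ t : ℝ, 0 < t → ∀ κ : ℝ, 0 < κ →
      ∫⁻ x, (if x = 0 then (⊤ : ℝ≥0∞)
        else ENNReal.ofReal (Real.exp (l * ‖x‖ ^ (-κ)))) ∂(μ t) = ⊤ := by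
  intro l hl t ht κ hκ
  haveI hP : IsProbabilityMeasure (μ t) := hμ t ht
  set f : EuclideanSpace ℝ (Fin d) → ℝ := fun ξ => Real.exp (-t * (ψ ξ).re) with hf
  -- the characteristic function is real positive
  have hfeq : ∀ ξ, Complex.exp (-(t:ℂ) * ψ ξ) = ((f ξ : ℝ) : ℂ) := by
    intro ξ
    have h2 : -(t:ℂ) * ψ ξ = ((-t * (ψ ξ).re : ℝ) : ℂ) := by
      apply Complex.ext <;>
        simp [Complex.mul_re, Complex.mul_im, hreal ξ]
    rw [h2, ← Complex.ofReal_exp]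
  have hfpos : ∀ ξ, 0 < f ξ := fun ξ => Real.exp_pos _
  -- continuity of the characteristic function
  have hcont : Continuous fun ξ : EuclideanSpace ℝ (Fin d) =>
      ∫ x, Complex.exp (Complex.I * ((inner ℝ ξ x : ℝ) : ℂ)) ∂(μ t) := by
    apply continuous_of_dominated (bound := fun _ => 1)
    · intro ξ
      exact (Complex.continuous_exp.comp (continuous_const.mul
        (Complex.continuous_ofReal.comp
          (continuous_const.inner continuous_id)))).aestronglyMeasurable
    · intro ξ
      filter_upwards with x
      simp [Complex.norm_exp]
    · exact integrable_const 1
    · filter_upwards with x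
      exact Complex.continuous_exp.comp (continuous_const.mul
        (Complex.continuous_ofReal.comp ((continuous_id.inner continuous_const))))
  have hf_eq' : ∀ ξ, f ξ
      = (∫ x, Complex.exp (Complex.I * ((inner ℝ ξ x : ℝ) : ℂ)) ∂(μ t)).re := by
    intro ξ
    rw [hchar t ht ξ, hfeq ξ, Complex.ofReal_re]
  have hf_cont : Continuous f := by
    have := Complex.continuous_re.comp hcont
    refine Continuous.congr this fun ξ => (hf_eq' ξ).symm
  have hf_le1 : ∀ ξ, f ξ ≤ 1 := by
    intro ξ
    have h1 : f ξ = ‖∫ x, Complex.exp (Complex.I * ((inner ℝ ξ x : ℝ) : ℂ)) ∂(μ t)‖ := by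
      rw [hchar t ht ξ, hfeq ξ]
      simp [abs_of_pos (hfpos ξ)]
    rw [h1]
    calc ‖∫ x, Complex.exp (Complex.I * ((inner ℝ ξ x : ℝ) : ℂ)) ∂(μ t)‖
        ≤ ∫ x, ‖Complex.exp (Complex.I * ((inner ℝ ξ x : ℝ) : ℂ))‖ ∂(μ t) :=
          norm_integral_le_integral_norm _
      _ ≤ 1 := by
          rw [show (fun x : EuclideanSpace ℝ (Fin d) =>
              ‖Complex.exp (Complex.I * ((inner ℝ ξ x : ℝ) : ℂ))‖)
              = fun _ : EuclideanSpace ℝ (Fin d) => (1:ℝ) from funext fun x => by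
                simp [Complex.norm_exp]]
          simp
  -- min of f on the unit ball
  obtain ⟨ξ₀, hξ₀S, hξ₀min⟩ :=
    (isCompact_closedBall (0:EuclideanSpace ℝ (Fin d)) 1).exists_isMinOn
    ⟨0, Metric.mem_closedBall_self zero_le_one⟩ hf_cont.continuousOn
  set m₀ := f ξ₀ with hm₀def
  have hm₀ : 0 < m₀ := hfpos ξ₀
  set V := (volume (Metric.closedBall (0:EuclideanSpace ℝ (Fin d)) 1)).toReal with hV
  have hVpos : 0 < V :=
    ENNReal.toReal_pos (Metric.measure_closedBall_pos volume 0 one_pos).ne'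
      (isCompact_closedBall (0:EuclideanSpace ℝ (Fin d)) 1).measure_lt_top.ne
  -- key Fourier identity
  have key : ∀ σ : ℝ, 0 < σ →
      ∫ ξ : EuclideanSpace ℝ (Fin d), Real.exp (-(σ^2/2) * ‖ξ‖^2) * f ξ
        = (2*Real.pi/σ^2) ^ ((d:ℝ)/2) * ∫ x, Real.exp (-(‖x‖^2/(2*σ^2))) ∂(μ t) := by
    intro σ hσ
    have hb : 0 < (((σ^2/2 : ℝ)) : ℂ).re := by rw [Complex.ofReal_re]; positivity
    have hgauss : Integrable (fun ξ : EuclideanSpace ℝ (Fin d) =>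
        Real.exp (-(σ^2/2) * ‖ξ‖^2)) volume := by
      have := (GaussianFourier.integrable_cexp_neg_mul_sq_norm_add
        (V := EuclideanSpace ℝ (Fin d)) hb 0 0).norm
      refine this.congr (Filter.Eventually.of_forall fun ξ => ?_)
      simp [Complex.norm_exp, ← Complex.ofReal_pow]
    have hcexp_coe : ∀ ξ : EuclideanSpace ℝ (Fin d),
        Complex.exp (-((σ^2/2 : ℝ) : ℂ) * (‖ξ‖:ℂ)^2)
        = ((Real.exp (-(σ^2/2) * ‖ξ‖^2) : ℝ) : ℂ) := by
      intro ξ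
      rw [show -((σ^2/2 : ℝ) : ℂ) * (‖ξ‖:ℂ)^2 = ((-(σ^2/2) * ‖ξ‖^2 : ℝ) : ℂ) by push_cast; ring,
        ← Complex.ofReal_exp]
    -- Fubini
    have hcont2 : Continuous (Function.uncurry fun (ξ x : EuclideanSpace ℝ (Fin d)) =>
        Complex.exp (-((σ^2/2 : ℝ) : ℂ) * ‖ξ‖^2)
          * Complex.exp (Complex.I * ((inner ℝ ξ x : ℝ) : ℂ))) := by
      apply Continuous.mul
      · exact Complex.continuous_exp.comp ((continuous_const.mul
          ((Complex.continuous_ofReal.comp (continuous_norm.comp continuous_fst)).pow 2)))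
      · exact Complex.continuous_exp.comp (continuous_const.mul
          (Complex.continuous_ofReal.comp (continuous_inner.comp
            (continuous_fst.prodMk continuous_snd))))
    have hF : Integrable (Function.uncurry fun (ξ x : EuclideanSpace ℝ (Fin d)) =>
        Complex.exp (-((σ^2/2 : ℝ) : ℂ) * ‖ξ‖^2)
          * Complex.exp (Complex.I * ((inner ℝ ξ x : ℝ) : ℂ))) (volume.prod (μ t)) := by
      have hbd : Integrable (fun p : EuclideanSpace ℝ (Fin d) × EuclideanSpace ℝ (Fin d) =>
          Real.exp (-(σ^2/2) * ‖p.1‖^2) * (1:ℝ)) (volume.prod (μ t)) :=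
        hgauss.mul_prod (integrable_const 1)
      refine hbd.mono' hcont2.aestronglyMeasurable (Filter.Eventually.of_forall fun p => ?_)
      simp only [Function.uncurry, norm_mul, Complex.norm_exp, mul_one]
      have h1 : (-((σ^2/2:ℝ):ℂ) * (‖p.1‖:ℂ)^2).re = -(σ^2/2) * ‖p.1‖^2 := by
        simp [← Complex.ofReal_pow, ← Complex.ofReal_neg, ← Complex.ofReal_mul]
      have h2 : (Complex.I * ((inner ℝ p.1 p.2 : ℝ):ℂ)).re = 0 := by simp
      rw [h1, h2, Real.exp_zero, mul_one]
    have hswap : ∫ ξ : EuclideanSpace ℝ (Fin d), Complex.exp (-((σ^2/2 : ℝ) : ℂ) * ‖ξ‖^2)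
          * (∫ x, Complex.exp (Complex.I * ((inner ℝ ξ x : ℝ) : ℂ)) ∂(μ t))
        = ∫ x, (∫ ξ : EuclideanSpace ℝ (Fin d), Complex.exp (-((σ^2/2 : ℝ) : ℂ) * ‖ξ‖^2)
          * Complex.exp (Complex.I * ((inner ℝ ξ x : ℝ) : ℂ))) ∂(μ t) := by
      have := MeasureTheory.integral_integral_swap hF
      simp_rw [← MeasureTheory.integral_const_mul]
      exact this
    -- Gaussian integral formula
    have hgf : ∀ x : EuclideanSpace ℝ (Fin d),
        ∫ ξ : EuclideanSpace ℝ (Fin d), Complex.exp (-((σ^2/2 : ℝ) : ℂ) * ‖ξ‖^2)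
          * Complex.exp (Complex.I * ((inner ℝ ξ x : ℝ) : ℂ))
        = (((2*Real.pi/σ^2) ^ ((d:ℝ)/2) * Real.exp (-(‖x‖^2/(2*σ^2))) : ℝ) : ℂ) := by
      intro x
      have h := GaussianFourier.integral_cexp_neg_mul_sq_norm_add
        (V := EuclideanSpace ℝ (Fin d)) hb Complex.I x
      rw [show (∫ ξ : EuclideanSpace ℝ (Fin d), Complex.exp (-((σ^2/2 : ℝ) : ℂ) * ‖ξ‖^2)
          * Complex.exp (Complex.I * ((inner ℝ ξ x : ℝ) : ℂ)))
          = ∫ v : EuclideanSpace ℝ (Fin d), Complex.exp (-((σ^2/2 : ℝ) : ℂ) * ‖v‖^2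
              + Complex.I * ((inner ℝ x v : ℝ) : ℂ)) from by
        congr 1; funext ξ; rw [Complex.exp_add, real_inner_comm], h]
      rw [show Module.finrank ℝ (EuclideanSpace ℝ (Fin d)) = d from finrank_euclideanSpace_fin]
      have h1 : ((Real.pi : ℂ) / ((σ^2/2 : ℝ) : ℂ)) = (((2*Real.pi/σ^2) : ℝ) : ℂ) := by
        push_cast; field_simp
      have h2 : (Complex.I ^ 2 * (‖x‖:ℂ)^2 / (4 * ((σ^2/2 : ℝ) : ℂ)))
          = ((-(‖x‖^2/(2*σ^2)) : ℝ) : ℂ) := by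
        rw [Complex.I_sq]; push_cast; field_simp; ring
      rw [h1, h2, ← Complex.ofReal_exp, Complex.ofReal_mul]
      congr 1
      rw [show ((d:ℂ)/2) = (((d:ℝ)/2 : ℝ) : ℂ) by push_cast; ring,
        ← Complex.ofReal_cpow (by positivity)]
    -- put everything together over ℂ
    apply Complex.ofReal_inj.mp
    calc ((∫ ξ : EuclideanSpace ℝ (Fin d), Real.exp (-(σ^2/2) * ‖ξ‖^2) * f ξ : ℝ) : ℂ)
        = ∫ ξ : EuclideanSpace ℝ (Fin d),
            ((Real.exp (-(σ^2/2) * ‖ξ‖^2) * f ξ : ℝ) : ℂ) := (integral_ofReal (𝕜 := ℂ)).symm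
      _ = ∫ ξ : EuclideanSpace ℝ (Fin d), Complex.exp (-((σ^2/2 : ℝ) : ℂ) * ‖ξ‖^2)
            * (∫ x, Complex.exp (Complex.I * ((inner ℝ ξ x : ℝ) : ℂ)) ∂(μ t)) := by
          congr 1; funext ξ
          rw [hchar t ht ξ, hfeq ξ, hcexp_coe ξ, Complex.ofReal_mul]
      _ = ∫ x, (∫ ξ : EuclideanSpace ℝ (Fin d), Complex.exp (-((σ^2/2 : ℝ) : ℂ) * ‖ξ‖^2)
            * Complex.exp (Complex.I * ((inner ℝ ξ x : ℝ) : ℂ))) ∂(μ t) := hswap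
      _ = ∫ x, (((2*Real.pi/σ^2) ^ ((d:ℝ)/2)
            * Real.exp (-(‖x‖^2/(2*σ^2))) : ℝ) : ℂ) ∂(μ t) := by
          congr 1; funext x; exact hgf x
      _ = ((∫ x, (2*Real.pi/σ^2) ^ ((d:ℝ)/2)
            * Real.exp (-(‖x‖^2/(2*σ^2))) ∂(μ t) : ℝ) : ℂ) := by exact integral_ofReal (𝕜 := ℂ)
      _ = (((2*Real.pi/σ^2) ^ ((d:ℝ)/2)
            * ∫ x, Real.exp (-(‖x‖^2/(2*σ^2))) ∂(μ t) : ℝ) : ℂ) := by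
          rw [MeasureTheory.integral_const_mul]
  -- lower bound for the ξ-integral
  have hlow : ∀ σ : ℝ, 0 < σ → σ ≤ 1 →
      Real.exp (-2⁻¹) * m₀ * V
        ≤ ∫ ξ : EuclideanSpace ℝ (Fin d), Real.exp (-(σ^2/2) * ‖ξ‖^2) * f ξ := by
    intro σ hσ hσ1
    have hb : 0 < (((σ^2/2 : ℝ)) : ℂ).re := by rw [Complex.ofReal_re]; positivity
    have hgauss : Integrable (fun ξ : EuclideanSpace ℝ (Fin d) =>
        Real.exp (-(σ^2/2) * ‖ξ‖^2)) volume := by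
      have := (GaussianFourier.integrable_cexp_neg_mul_sq_norm_add
        (V := EuclideanSpace ℝ (Fin d)) hb 0 0).norm
      refine this.congr (Filter.Eventually.of_forall fun ξ => ?_)
      simp [Complex.norm_exp, ← Complex.ofReal_pow]
    have hg_int : Integrable (fun ξ : EuclideanSpace ℝ (Fin d) =>
        Real.exp (-(σ^2/2) * ‖ξ‖^2) * f ξ) volume := by
      refine hgauss.mono' (((Real.continuous_exp.comp
          ((continuous_const.mul ((continuous_norm).pow 2)))).mul
          hf_cont).aestronglyMeasurable)
        (Filter.Eventually.of_forall fun ξ => ?_)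
      rw [Real.norm_eq_abs, abs_of_nonneg (mul_nonneg (Real.exp_pos _).le (hfpos ξ).le)]
      calc Real.exp (-(σ^2/2) * ‖ξ‖^2) * f ξ ≤ Real.exp (-(σ^2/2) * ‖ξ‖^2) * 1 := by
            gcongr
            exact hf_le1 ξ
        _ = Real.exp (-(σ^2/2) * ‖ξ‖^2) := mul_one _
    have hnn : 0 ≤ᵐ[volume] fun ξ : EuclideanSpace ℝ (Fin d) =>
        Real.exp (-(σ^2/2) * ‖ξ‖^2) * f ξ :=
      Filter.Eventually.of_forall fun ξ => mul_nonneg (Real.exp_pos _).le (hfpos ξ).le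
    calc Real.exp (-2⁻¹) * m₀ * V
        ≤ ∫ ξ in Metric.closedBall (0:EuclideanSpace ℝ (Fin d)) 1,
            Real.exp (-(σ^2/2) * ‖ξ‖^2) * f ξ := by
          rw [show Real.exp (-2⁻¹) * m₀ * V = volume.real (Metric.closedBall (0:EuclideanSpace ℝ (Fin d)) 1)
              • (Real.exp (-2⁻¹) * m₀) by rw [smul_eq_mul, measureReal_def, ← hV]; ring]
          refine setIntegral_ge_of_const_le measurableSet_closedBall
            (isCompact_closedBall _ _).measure_lt_top.ne (fun ξ hξ => ?_) hg_int.integrableOn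
          have hξ' : ‖ξ‖ ≤ 1 := by simpa [mem_closedBall_zero_iff] using hξ
          have h1 : Real.exp (-2⁻¹) ≤ Real.exp (-(σ^2/2) * ‖ξ‖^2) := by
            apply Real.exp_le_exp.mpr
            have e1 : σ^2 ≤ 1 := by nlinarith
            have e2 : ‖ξ‖^2 ≤ 1 := by nlinarith [norm_nonneg ξ]
            nlinarith [sq_nonneg σ, sq_nonneg (‖ξ‖), mul_nonneg (sq_nonneg σ) (sq_nonneg (‖ξ‖))]
          exact mul_le_mul h1 (hξ₀min hξ) hm₀.le (Real.exp_pos _).le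
      _ ≤ _ := setIntegral_le_integral hg_int hnn
  -- upper bound for the x-integral
  have hup : ∀ σ ε : ℝ, 0 < σ → 0 < ε →
      ∫ x, Real.exp (-(‖x‖^2/(2*σ^2))) ∂(μ t)
        ≤ ((μ t) (Metric.closedBall 0 ε)).toReal + Real.exp (-(ε^2/(2*σ^2))) := by
    intro σ ε hσ hε
    have hcont3 : Continuous fun x : EuclideanSpace ℝ (Fin d) =>
        Real.exp (-(‖x‖^2/(2*σ^2))) :=
      Real.continuous_exp.comp (((continuous_norm).pow 2).div_const _).neg
    have hint1 : Integrable (fun x : EuclideanSpace ℝ (Fin d) =>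
        Real.exp (-(‖x‖^2/(2*σ^2)))) (μ t) := by
      refine (integrable_const (1:ℝ)).mono' hcont3.aestronglyMeasurable
        (Filter.Eventually.of_forall fun x => ?_)
      rw [Real.norm_eq_abs, abs_of_nonneg (Real.exp_pos _).le]
      exact Real.exp_le_one_iff.mpr (neg_nonpos.mpr (by positivity))
    have hind : Integrable (fun x : EuclideanSpace ℝ (Fin d) =>
        Set.indicator (Metric.closedBall 0 ε) (fun _ => (1:ℝ)) x) (μ t) :=
      (integrable_const 1).indicator measurableSet_closedBall
    have hpt : ∀ x : EuclideanSpace ℝ (Fin d), Real.exp (-(‖x‖^2/(2*σ^2)))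
        ≤ Set.indicator (Metric.closedBall 0 ε) (fun _ => (1:ℝ)) x
          + Real.exp (-(ε^2/(2*σ^2))) := by
      intro x
      by_cases hx : x ∈ Metric.closedBall (0:EuclideanSpace ℝ (Fin d)) ε
      · rw [Set.indicator_of_mem hx]
        have h1 : Real.exp (-(‖x‖^2/(2*σ^2))) ≤ 1 :=
          Real.exp_le_one_iff.mpr (neg_nonpos.mpr (by positivity))
        have h2 := (Real.exp_pos (-(ε^2/(2*σ^2)))).le
        linarith
      · rw [Set.indicator_of_notMem hx, zero_add]
        apply Real.exp_le_exp.mpr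
        have hx' : ε ≤ ‖x‖ := by
          rw [Metric.mem_closedBall, dist_zero_right] at hx
          exact (not_le.mp hx).le
        have : ε^2/(2*σ^2) ≤ ‖x‖^2/(2*σ^2) := by gcongr
        linarith
    calc ∫ x, Real.exp (-(‖x‖^2/(2*σ^2))) ∂(μ t)
        ≤ ∫ x, (Set.indicator (Metric.closedBall 0 ε) (fun _ => (1:ℝ)) x
            + Real.exp (-(ε^2/(2*σ^2)))) ∂(μ t) :=
          integral_mono hint1 (hind.add (integrable_const _)) hpt
      _ = ((μ t) (Metric.closedBall 0 ε)).toReal + Real.exp (-(ε^2/(2*σ^2))) := by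
          rw [integral_add hind (integrable_const _),
            integral_indicator_const (1:ℝ) measurableSet_closedBall, integral_const]
          simp [smul_eq_mul, measure_univ, measureReal_def]
  -- small-ball lower bound
  have hball : ∀ σ ε : ℝ, 0 < σ → σ ≤ 1 → 0 < ε →
      Real.exp (-2⁻¹) * m₀ * V * (σ^2/(2*Real.pi))^d
        ≤ ((μ t) (Metric.closedBall 0 ε)).toReal + Real.exp (-(ε^2/(2*σ^2))) := by
    intro σ ε hσ hσ1 hε
    have hπ : (0:ℝ) < 2*Real.pi := by positivity
    set α := (2*Real.pi/σ^2) ^ ((d:ℝ)/2) with hα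
    have hαpos : 0 < α := Real.rpow_pos_of_pos (by positivity) _
    have h1 : Real.exp (-2⁻¹) * m₀ * V
        ≤ α * (((μ t) (Metric.closedBall 0 ε)).toReal + Real.exp (-(ε^2/(2*σ^2)))) := by
      refine (hlow σ hσ hσ1).trans ?_
      rw [key σ hσ]
      exact mul_le_mul_of_nonneg_left (hup σ ε hσ hε) hαpos.le
    have hbase : (0:ℝ) < σ^2/(2*Real.pi) := by positivity
    have hbase1 : σ^2/(2*Real.pi) ≤ 1 := by
      rw [div_le_one hπ]
      nlinarith [Real.pi_gt_three]
    have hdd : ((d:ℝ)/2 : ℝ) ≤ (d:ℝ) := by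
      have : (0:ℝ) ≤ (d:ℝ) := Nat.cast_nonneg d
      linarith
    have h2a : (σ^2/(2*Real.pi) : ℝ)^(d:ℝ) ≤ (σ^2/(2*Real.pi))^((d:ℝ)/2) :=
      Real.rpow_le_rpow_of_exponent_ge hbase hbase1 hdd
    have h2b : α⁻¹ = (σ^2/(2*Real.pi))^((d:ℝ)/2) := by
      rw [hα, ← Real.inv_rpow (by positivity), inv_div]
    have h2 : (σ^2/(2*Real.pi))^d ≤ α⁻¹ := by
      rw [h2b, ← Real.rpow_natCast (σ^2/(2*Real.pi)) d]
      exact h2a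
    calc Real.exp (-2⁻¹) * m₀ * V * (σ^2/(2*Real.pi))^d
        ≤ (Real.exp (-2⁻¹) * m₀ * V) * α⁻¹ := by gcongr
      _ ≤ _ := by
          rw [← div_eq_mul_inv, div_le_iff₀ hαpos]
          exact le_trans h1 (le_of_eq (mul_comm _ _))
  -- specialize to σ = ε² with ε = 1/y
  have hc₃ : 0 < Real.exp (-2⁻¹) * m₀ * V / (2*Real.pi)^d := by positivity
  set c₃ := Real.exp (-2⁻¹) * m₀ * V / (2*Real.pi)^d with hc₃def
  have hball2 : ∀ y : ℝ, 1 ≤ y →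
      c₃ * (y⁻¹)^(4*d)
        ≤ ((μ t) (Metric.closedBall 0 y⁻¹)).toReal + Real.exp (-(y^2/2)) := by
    intro y hy
    have hy0 : (0:ℝ) < y := lt_of_lt_of_le one_pos hy
    have hyinv : (0:ℝ) < y⁻¹ := inv_pos.mpr hy0
    have hle1 : (y⁻¹)^2 ≤ 1 := by
      have h1 : y⁻¹ ≤ 1 := inv_le_one_of_one_le₀ hy
      nlinarith
    have h := hball ((y⁻¹)^2) y⁻¹ (by positivity) hle1 hyinv
    have e2 : ((y⁻¹)^2/(2*((y⁻¹)^2)^2) : ℝ) = y^2/2 := by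
      field_simp
    rw [e2] at h
    refine le_trans (le_of_eq ?_) h
    rw [hc₃def]
    have e0 : (((y⁻¹)^2)^2 : ℝ) = (y⁻¹)^4 := by ring
    rw [e0, div_pow, ← pow_mul]
    ring
  -- asymptotics
  have hA : Tendsto (fun y : ℝ => y^(4*d) * Real.exp (-(y^2/2))) atTop (nhds 0) := by
    have t1 := tendsto_rpow_mul_exp_neg_mul_atTop_nhds_zero ((4*d : ℕ) : ℝ) 2⁻¹ (by norm_num)
    apply tendsto_of_tendsto_of_tendsto_of_le_of_le' tendsto_const_nhds t1
    · filter_upwards [eventually_ge_atTop (0:ℝ)] with y hy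
      positivity
    · filter_upwards [eventually_ge_atTop (1:ℝ)] with y hy
      have hy0 : (0:ℝ) < y := lt_of_lt_of_le one_pos hy
      rw [← Real.rpow_natCast y (4*d)]
      gcongr
      nlinarith
  have hB : Tendsto (fun y : ℝ => Real.exp (l * y^κ) * (y⁻¹)^(4*d)) atTop atTop := by
    have t0 := (tendsto_exp_mul_div_rpow_atTop (((4*d : ℕ) : ℝ)/κ) l hl).comp
      (tendsto_rpow_atTop hκ)
    refine t0.congr' ?_
    filter_upwards [eventually_ge_atTop (1:ℝ)] with y hy
    have hy0 : (0:ℝ) < y := lt_of_lt_of_le one_pos hy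
    show Real.exp (l * y^κ) / (y^κ)^(((4*d : ℕ) : ℝ)/κ) = Real.exp (l * y^κ) * (y⁻¹)^(4*d)
    rw [← Real.rpow_mul hy0.le κ, mul_div_cancel₀ _ hκ.ne', Real.rpow_natCast,
      div_eq_mul_inv, inv_pow]
  -- conclusion
  by_contra hL
  obtain ⟨n, hn⟩ := ENNReal.exists_nat_gt hL
  have hAev : ∀ᶠ y in atTop, y^(4*d) * Real.exp (-(y^2/2)) < c₃/2 :=
    hA.eventually (gt_mem_nhds (by positivity))
  have hBev : ∀ᶠ y in atTop, (n:ℝ) ≤ c₃/2 * (Real.exp (l * y^κ) * (y⁻¹)^(4*d)) :=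
    (hB.const_mul_atTop (show (0:ℝ) < c₃/2 by positivity)).eventually_ge_atTop (n:ℝ)
  obtain ⟨y, hy1, hAy, hBy⟩ := ((eventually_ge_atTop (1:ℝ)).and (hAev.and hBev)).exists
  have hy0 : (0:ℝ) < y := lt_of_lt_of_le one_pos hy1
  have hyinv : (0:ℝ) < y⁻¹ := inv_pos.mpr hy0
  -- small ball mass is at least (c₃/2) (y⁻¹)^{4d}
  have hq : c₃/2 * (y⁻¹)^(4*d) ≤ ((μ t) (Metric.closedBall 0 y⁻¹)).toReal := by
    have h1 := hball2 y hy1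
    have h2 : Real.exp (-(y^2/2)) ≤ c₃/2 * (y⁻¹)^(4*d) := by
      have h3 : y^(4*d) * Real.exp (-(y^2/2)) ≤ c₃/2 := hAy.le
      have h4 : (0:ℝ) < y^(4*d) := pow_pos hy0 _
      rw [show (c₃/2 * (y⁻¹)^(4*d) : ℝ) = c₃/2 / y^(4*d) by
        rw [div_eq_mul_inv (c₃/2), inv_pow], le_div_iff₀ h4]
      linarith [h3, (Real.exp_pos (-(y^2/2))).le]
    linarith
  -- exponential lower bound
  have hexp : ((y⁻¹ : ℝ))^(-κ) = y^κ := by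
    rw [← Real.rpow_neg_one y, ← Real.rpow_mul hy0.le]
    norm_num
  have hq2 : (n:ℝ) ≤ Real.exp (l * (y⁻¹)^(-κ))
      * ((μ t) (Metric.closedBall 0 y⁻¹)).toReal := by
    rw [hexp]
    calc (n:ℝ) ≤ c₃/2 * (Real.exp (l * y^κ) * (y⁻¹)^(4*d)) := hBy
      _ = Real.exp (l * y^κ) * (c₃/2 * (y⁻¹)^(4*d)) := by ring
      _ ≤ _ := by gcongr
  -- transfer to the lintegral
  have hle : (n:ℝ≥0∞) ≤ ∫⁻ x, (if x = 0 then (⊤:ℝ≥0∞)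
      else ENNReal.ofReal (Real.exp (l * ‖x‖ ^ (-κ)))) ∂(μ t) := by
    have hconst : (n:ℝ≥0∞) ≤ ENNReal.ofReal (Real.exp (l * (y⁻¹)^(-κ)))
        * (μ t) (Metric.closedBall 0 y⁻¹) := by
      calc (n:ℝ≥0∞) = ENNReal.ofReal (n:ℝ) := by simp
        _ ≤ ENNReal.ofReal (Real.exp (l * (y⁻¹)^(-κ))
            * ((μ t) (Metric.closedBall 0 y⁻¹)).toReal) := ENNReal.ofReal_le_ofReal hq2
        _ = ENNReal.ofReal (Real.exp (l * (y⁻¹)^(-κ)))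
            * ENNReal.ofReal (((μ t) (Metric.closedBall 0 y⁻¹)).toReal) :=
            ENNReal.ofReal_mul (Real.exp_pos _).le
        _ = _ := by rw [ENNReal.ofReal_toReal (measure_ne_top _ _)]
    refine hconst.trans ?_
    rw [← lintegral_indicator_const measurableSet_closedBall
      (ENNReal.ofReal (Real.exp (l * (y⁻¹)^(-κ))))]
    apply lintegral_mono
    intro x
    by_cases hx : x ∈ Metric.closedBall (0:EuclideanSpace ℝ (Fin d)) y⁻¹
    · rw [Set.indicator_of_mem hx]
      by_cases hx0 : x = 0
      · simp [hx0]
      · simp only [hx0, if_false]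
        apply ENNReal.ofReal_le_ofReal
        apply Real.exp_le_exp.mpr
        have hxpos : 0 < ‖x‖ := norm_pos_iff.mpr hx0
        have hxle : ‖x‖ ≤ y⁻¹ := by
          rw [Metric.mem_closedBall, dist_zero_right] at hx
          exact hx
        have := Real.rpow_le_rpow_of_nonpos hxpos hxle (neg_nonpos.mpr hκ.le)
        exact mul_le_mul_of_nonneg_left this hl.le
    · rw [Set.indicator_of_notMem hx]
      exact zero_le
  exact absurd hle (not_le.mpr hn)
end

section
/- Let σ ∈ (0,1] and κ ∈ (0,σ), and suppose limsup_{u↓0} φ(u)/u^σ < ∞ (equivalently, there is C_σ > 0 with φ(u) ≤ C_σ u^σ for 0 < u ≤ 1). Then there exists a constant C (depending on κ, σ and C_σ) such that E S_t^κ = ∫ s^κ μ_t(ds) ≤ C·(max(t,1))^{κ/σ} for all t > 0. If moreover limsup_{u→∞} φ(u)/u^σ < ∞, then E S_t^κ ≤ C·t^{κ/σ} for all t > 0. -/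
open MeasureTheory Filter Set
open scoped ENNReal


lemma ae_nonneg_of_null_Iio (μ : Measure ℝ) (h : μ (Set.Iio 0) = 0) :
    ∀ᵐ a ∂μ, (0:ℝ) ≤ a := by
  rw [ae_iff]
  convert h using 2
  ext a; simp [not_le]

lemma tail_bound (μ : Measure ℝ) [IsProbabilityMeasure μ] (hsupp : μ (Set.Iio 0) = 0)
    (r s : ℝ) (hs : 0 < s)
    (hlap : ∫ a, Real.exp (-(1/s) * a) ∂μ = Real.exp (-r)) :
    μ {a | s ≤ a} ≤ ENNReal.ofReal (2 * r) := by
  have hμnn := ae_nonneg_of_null_Iio μ hsupp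
  have hint : Integrable (fun a => Real.exp (-(1/s) * a)) μ := by
    by_contra h
    rw [integral_undef h] at hlap
    exact (Real.exp_pos (-r)).ne' hlap.symm
  have hint2 : Integrable (fun a => 1 - Real.exp (-(1/s) * a)) μ :=
    (integrable_const 1).sub hint
  have hval : ∫ a, (1 - Real.exp (-(1/s) * a)) ∂μ = 1 - Real.exp (-r) := by
    rw [integral_sub (integrable_const 1) hint, integral_const, probReal_univ, hlap]
    simp
  have hnn : ∀ᵐ a ∂μ, 0 ≤ 1 - Real.exp (-(1/s) * a) := by
    filter_upwards [hμnn] with a ha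
    have : Real.exp (-(1/s) * a) ≤ 1 := by
      rw [Real.exp_le_one_iff]
      have : 0 ≤ (1/s) * a := by positivity
      linarith
    linarith
  have hL : ∫⁻ a, ENNReal.ofReal (1 - Real.exp (-(1/s) * a)) ∂μ
      = ENNReal.ofReal (1 - Real.exp (-r)) := by
    rw [← ofReal_integral_eq_lintegral_ofReal hint2 hnn, hval]
  have hmble : Measurable fun a => ENNReal.ofReal (1 - Real.exp (-(1/s) * a)) := by
    fun_prop
  have hlow : μ {a | s ≤ a} * ENNReal.ofReal (1 - Real.exp (-1))
      ≤ ENNReal.ofReal (1 - Real.exp (-r)) := by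
    rw [← hL]
    calc μ {a | s ≤ a} * ENNReal.ofReal (1 - Real.exp (-1))
        = ∫⁻ _ in {a | s ≤ a}, ENNReal.ofReal (1 - Real.exp (-1)) ∂μ := by
          rw [setLIntegral_const, mul_comm]
      _ ≤ ∫⁻ a in {a | s ≤ a}, ENNReal.ofReal (1 - Real.exp (-(1/s) * a)) ∂μ := by
          apply setLIntegral_mono hmble
          intro a ha
          apply ENNReal.ofReal_le_ofReal
          have h1 : (-(1/s)) * a ≤ -1 := by
            have : (1/s) * s ≤ (1/s) * a := by
              apply mul_le_mul_of_nonneg_left ha (by positivity)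
            rw [one_div_mul_cancel hs.ne'] at this
            nlinarith
          have := Real.exp_le_exp.2 h1
          linarith
      _ ≤ ∫⁻ a, ENNReal.ofReal (1 - Real.exp (-(1/s) * a)) ∂μ :=
          setLIntegral_le_lintegral _ _
  -- 2 * (1 - exp(-1)) ≥ 1
  have he : Real.exp (-1) ≤ 1/2 := by
    have h1 : (2:ℝ) ≤ Real.exp 1 := by
      have := Real.add_one_le_exp 1
      linarith
    have h2 : Real.exp (-1) = (Real.exp 1)⁻¹ := by rw [Real.exp_neg]
    rw [h2]
    rw [inv_le_comm₀ (Real.exp_pos 1) (by norm_num)] at *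
    · linarith
  have h2e : (1:ℝ≥0∞) ≤ 2 * ENNReal.ofReal (1 - Real.exp (-1)) := by
    have : (2:ℝ≥0∞) * ENNReal.ofReal (1 - Real.exp (-1))
        = ENNReal.ofReal (2 * (1 - Real.exp (-1))) := by
      rw [ENNReal.ofReal_mul (by norm_num)]
      norm_num
    rw [this, ← ENNReal.ofReal_one]
    apply ENNReal.ofReal_le_ofReal
    linarith
  have hr1 : (1:ℝ) - Real.exp (-r) ≤ r := by
    have := Real.add_one_le_exp (-r)
    linarith
  calc μ {a | s ≤ a} = 1 * μ {a | s ≤ a} := (one_mul _).symm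
    _ ≤ (2 * ENNReal.ofReal (1 - Real.exp (-1))) * μ {a | s ≤ a} :=
        mul_le_mul_left h2e _
    _ = 2 * (μ {a | s ≤ a} * ENNReal.ofReal (1 - Real.exp (-1))) := by ring
    _ ≤ 2 * ENNReal.ofReal (1 - Real.exp (-r)) := mul_le_mul_right hlow _
    _ ≤ 2 * ENNReal.ofReal r := mul_le_mul_right (ENNReal.ofReal_le_ofReal hr1) _
    _ = ENNReal.ofReal (2 * r) := by
        rw [ENNReal.ofReal_mul (by norm_num)]; norm_num


lemma ae_nonneg_of_null_Iio' (μ : Measure ℝ) (h : μ (Set.Iio 0) = 0) :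
    ∀ᵐ a ∂μ, (0:ℝ) ≤ a := by
  rw [ae_iff]
  convert h using 2
  ext a; simp [not_le]

lemma moment_of_tail (μ : Measure ℝ) [IsProbabilityMeasure μ] (hsupp : μ (Set.Iio 0) = 0)
    (σ κ A M : ℝ) (hσ0 : 0 < σ) (hκ0 : 0 < κ) (hκσ : κ < σ) (hA : 0 < A) (hM : 0 ≤ M)
    (htail : ∀ s, A ≤ s → μ {a | s ≤ a} ≤ ENNReal.ofReal (M * s ^ (-σ))) :
    ∫⁻ s, ENNReal.ofReal (s ^ κ) ∂μ
      ≤ ENNReal.ofReal (A ^ κ + κ * M / (σ - κ) * A ^ (κ - σ)) := by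
  have hμnn := ae_nonneg_of_null_Iio' μ hsupp
  rw [MeasureTheory.lintegral_rpow_eq_lintegral_meas_le_mul μ hμnn
    measurable_id.aemeasurable hκ0]
  have hsplit : (Ioi (0:ℝ)) = Ioc 0 A ∪ Ioi A := (Set.Ioc_union_Ioi_eq_Ioi hA.le).symm
  rw [hsplit, lintegral_union measurableSet_Ioi (Set.Ioc_disjoint_Ioi le_rfl)]
  have I1 : ∫⁻ s in Ioc (0:ℝ) A, μ {a | s ≤ a} * ENNReal.ofReal (s ^ (κ-1))
      ≤ ENNReal.ofReal (A ^ κ / κ) := by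
    calc ∫⁻ s in Ioc (0:ℝ) A, μ {a | s ≤ a} * ENNReal.ofReal (s ^ (κ-1))
        ≤ ∫⁻ s in Ioc (0:ℝ) A, ENNReal.ofReal (s ^ (κ-1)) := by
          apply setLIntegral_mono (by fun_prop)
          intro s _
          calc μ {a | s ≤ a} * ENNReal.ofReal (s ^ (κ-1))
              ≤ 1 * ENNReal.ofReal (s ^ (κ-1)) :=
                mul_le_mul_left prob_le_one _
            _ = ENNReal.ofReal (s ^ (κ-1)) := one_mul _
      _ = ENNReal.ofReal (∫ s in Ioc (0:ℝ) A, s ^ (κ-1)) := by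
          rw [ofReal_integral_eq_lintegral_ofReal]
          · exact (intervalIntegral.intervalIntegrable_rpow' (by linarith)).1
          · filter_upwards [ae_restrict_mem measurableSet_Ioc] with s hs
            exact Real.rpow_nonneg hs.1.le _
      _ = ENNReal.ofReal (A ^ κ / κ) := by
          congr 1
          rw [← intervalIntegral.integral_of_le hA.le,
            integral_rpow (Or.inl (by linarith))]
          rw [Real.zero_rpow (by linarith : κ - 1 + 1 ≠ 0)]
          ring_nf
  have I2 : ∫⁻ s in Ioi A, μ {a | s ≤ a} * ENNReal.ofReal (s ^ (κ-1))
      ≤ ENNReal.ofReal (M * (A ^ (κ - σ) / (σ - κ))) := by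
    calc ∫⁻ s in Ioi A, μ {a | s ≤ a} * ENNReal.ofReal (s ^ (κ-1))
        ≤ ∫⁻ s in Ioi A, ENNReal.ofReal (M * s ^ (κ - σ - 1)) := by
          apply setLIntegral_mono (by fun_prop)
          intro s hs
          have hs0 : (0:ℝ) < s := lt_of_lt_of_le hA (le_of_lt hs)
          calc μ {a | s ≤ a} * ENNReal.ofReal (s ^ (κ-1))
              ≤ ENNReal.ofReal (M * s ^ (-σ)) * ENNReal.ofReal (s ^ (κ-1)) :=
                mul_le_mul_left (htail s hs.le) _
            _ = ENNReal.ofReal (M * s ^ (κ - σ - 1)) := by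
                rw [← ENNReal.ofReal_mul (by positivity)]
                congr 1
                rw [mul_assoc, ← Real.rpow_add hs0]
                ring_nf
      _ = ENNReal.ofReal (∫ s in Ioi A, M * s ^ (κ - σ - 1)) := by
          rw [ofReal_integral_eq_lintegral_ofReal]
          · exact (integrableOn_Ioi_rpow_of_lt (by linarith) hA).const_mul M
          · filter_upwards [ae_restrict_mem measurableSet_Ioi] with s hs
            have hs0 : (0:ℝ) < s := lt_of_lt_of_le hA (le_of_lt hs)
            positivity
      _ = ENNReal.ofReal (M * (A ^ (κ - σ) / (σ - κ))) := by
          congr 1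
          rw [MeasureTheory.integral_const_mul, integral_Ioi_rpow_of_lt (by linarith) hA]
          congr 1
          rw [show κ - σ - 1 + 1 = κ - σ by ring, show σ - κ = -(κ - σ) by ring,
            div_neg, neg_div]
  calc ENNReal.ofReal κ * ((∫⁻ s in Ioc (0:ℝ) A, μ {a | s ≤ a} * ENNReal.ofReal (s ^ (κ-1)))
        + ∫⁻ s in Ioi A, μ {a | s ≤ a} * ENNReal.ofReal (s ^ (κ-1)))
      ≤ ENNReal.ofReal κ * (ENNReal.ofReal (A ^ κ / κ)
        + ENNReal.ofReal (M * (A ^ (κ - σ) / (σ - κ)))) :=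
        mul_le_mul_right (add_le_add I1 I2) _
    _ = ENNReal.ofReal (A ^ κ + κ * M / (σ - κ) * A ^ (κ - σ)) := by
        have hσκ : (0:ℝ) < σ - κ := sub_pos.mpr hκσ
        rw [← ENNReal.ofReal_add (by positivity)
          (by positivity), ← ENNReal.ofReal_mul hκ0.le]
        congr 1
        field_simp


/-- positive moment estimates for a subordinator whose Bernstein
function satisfies φ(u) ≤ C_σ u^σ near 0. -/
theorem subordinator_positive_moment_estimate
    (b : ℝ) (hb : 0 ≤ b)
    (ν : Measure ℝ) (hνsupp : ν (Set.Iic 0) = 0)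
    (hνint : ∫⁻ x, ENNReal.ofReal (min x 1) ∂ν < ⊤)
    (φ : ℝ → ℝ)
    (hφ : ∀ u > 0, φ u = b * u + ∫ x, (1 - Real.exp (-u * x)) ∂ν)
    (μ : ℝ → Measure ℝ)
    (hμprob : ∀ t > 0, IsProbabilityMeasure (μ t))
    (hμsupp : ∀ t > 0, μ t (Set.Iio 0) = 0)
    (hlaplace : ∀ t > 0, ∀ u > 0, ∫ s, Real.exp (-u * s) ∂(μ t) = Real.exp (-t * φ u))
    (σ κ Cσ : ℝ) (hσ0 : 0 < σ) (hσ1 : σ ≤ 1) (hκ0 : 0 < κ) (hκσ : κ < σ)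
    (hCσ : 0 < Cσ)
    (hup : ∀ u : ℝ, 0 < u → u ≤ 1 → φ u ≤ Cσ * u ^ σ) :
    (∃ C > 0, ∀ t > 0,
      ∫⁻ s, ENNReal.ofReal (s ^ κ) ∂(μ t) ≤ ENNReal.ofReal (C * (max t 1) ^ (κ / σ)))
    ∧ ((∃ Cσ' : ℝ, ∀ u ≥ 1, φ u ≤ Cσ' * u ^ σ) →
      ∃ C > 0, ∀ t > 0,
        ∫⁻ s, ENNReal.ofReal (s ^ κ) ∂(μ t) ≤ ENNReal.ofReal (C * t ^ (κ / σ))) := by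
  have hσκ : (0:ℝ) < σ - κ := sub_pos.mpr hκσ
  have hconv : ∀ s : ℝ, 0 < s → (1/s : ℝ) ^ σ = s ^ (-σ) := by
    intro s hs
    rw [one_div, Real.inv_rpow hs.le, ← Real.rpow_neg hs.le]
  have tail : ∀ (K t : ℝ), 0 ≤ K → 0 < t → ∀ s, 0 < s → φ (1/s) ≤ K * s ^ (-σ) →
      μ t {a | s ≤ a} ≤ ENNReal.ofReal ((2*K*t) * s ^ (-σ)) := by
    intro K t hK ht s hs hφs
    haveI := hμprob t ht
    have h1s : (0:ℝ) < 1/s := by positivity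
    have hlap : ∫ a, Real.exp (-(1/s) * a) ∂(μ t) = Real.exp (-(t * φ (1/s))) := by
      rw [hlaplace t ht (1/s) h1s, neg_mul]
    have h := tail_bound (μ t) (hμsupp t ht) (t * φ (1/s)) s hs hlap
    refine h.trans (ENNReal.ofReal_le_ofReal ?_)
    have hsσ : (0:ℝ) ≤ s ^ (-σ) := Real.rpow_nonneg hs.le _
    nlinarith [mul_le_mul_of_nonneg_left hφs ht.le]
  constructor
  · refine ⟨1 + 2*Cσ*κ/(σ-κ), by positivity, ?_⟩
    intro t ht
    haveI := hμprob t ht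
    set t' := max t 1 with ht'def
    have ht'1 : (1:ℝ) ≤ t' := le_max_right _ _
    have ht'0 : (0:ℝ) < t' := lt_of_lt_of_le one_pos ht'1
    have htt' : t ≤ t' := le_max_left _ _
    set A := t' ^ (1/σ) with hAdef
    have hA1 : (1:ℝ) ≤ A := by
      calc (1:ℝ) = 1 ^ (1/σ) := (Real.one_rpow _).symm
        _ ≤ t' ^ (1/σ) := Real.rpow_le_rpow zero_le_one ht'1 (by positivity)
    have hA0 : (0:ℝ) < A := lt_of_lt_of_le one_pos hA1
    have hmom := moment_of_tail (μ t) (hμsupp t ht) σ κ A (2*Cσ*t) hσ0 hκ0 hκσ hA0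
      (by positivity) (fun s hsA => by
        have hs1 : (1:ℝ) ≤ s := hA1.trans hsA
        have hs0 : (0:ℝ) < s := by linarith
        refine tail Cσ t hCσ.le ht s hs0 ?_
        rw [← hconv s hs0]
        exact hup (1/s) (by positivity) ((div_le_one hs0).mpr hs1))
    refine hmom.trans (ENNReal.ofReal_le_ofReal ?_)
    have e1 : A ^ κ = t' ^ (κ/σ) := by
      rw [hAdef, ← Real.rpow_mul ht'0.le]
      congr 1; field_simp
    have e2 : A ^ (κ - σ) = t' ^ (κ/σ - 1) := by
      rw [hAdef, ← Real.rpow_mul ht'0.le]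
      congr 1; field_simp; try ring
    have e3 : t' * t' ^ (κ/σ - 1) = t' ^ (κ/σ) := by
      have h := (Real.rpow_add ht'0 1 (κ/σ - 1)).symm
      rw [Real.rpow_one] at h
      rw [show (1:ℝ) + (κ/σ - 1) = κ/σ by ring] at h
      exact h
    have e4 : t * t' ^ (κ/σ - 1) ≤ t' ^ (κ/σ) := by
      rw [← e3]
      exact mul_le_mul_of_nonneg_right htt' (Real.rpow_nonneg ht'0.le _)
    rw [e1, e2]
    have h := mul_le_mul_of_nonneg_left e4 (show (0:ℝ) ≤ 2*Cσ*κ/(σ-κ) by positivity)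
    have heq : κ * (2*Cσ*t)/(σ-κ) * t' ^ (κ/σ - 1) = 2*Cσ*κ/(σ-κ)*(t * t' ^ (κ/σ - 1)) := by
      ring
    have heq2 : (1 + 2*Cσ*κ/(σ-κ)) * t' ^ (κ/σ) = t' ^ (κ/σ) + 2*Cσ*κ/(σ-κ) * t' ^ (κ/σ) := by
      ring
    rw [heq, heq2]
    linarith [h]
  · rintro ⟨Cσ', hCσ'⟩
    set K := max Cσ' Cσ with hKdef
    have hK0 : (0:ℝ) < K := lt_of_lt_of_le hCσ (le_max_right _ _)
    have hφK : ∀ u : ℝ, 0 < u → φ u ≤ K * u ^ σ := by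
      intro u hu
      rcases le_or_gt u 1 with h | h
      · exact (hup u hu h).trans
          (mul_le_mul_of_nonneg_right (le_max_right _ _) (Real.rpow_nonneg hu.le _))
      · exact (hCσ' u h.le).trans
          (mul_le_mul_of_nonneg_right (le_max_left _ _) (Real.rpow_nonneg hu.le _))
    refine ⟨1 + 2*K*κ/(σ-κ), by positivity, ?_⟩
    intro t ht
    haveI := hμprob t ht
    set A := t ^ (1/σ) with hAdef
    have hA0 : (0:ℝ) < A := Real.rpow_pos_of_pos ht _
    have hmom := moment_of_tail (μ t) (hμsupp t ht) σ κ A (2*K*t) hσ0 hκ0 hκσ hA0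
      (by positivity) (fun s hsA => by
        have hs0 : (0:ℝ) < s := lt_of_lt_of_le hA0 hsA
        refine tail K t hK0.le ht s hs0 ?_
        rw [← hconv s hs0]
        exact hφK (1/s) (by positivity))
    refine hmom.trans (ENNReal.ofReal_le_ofReal ?_)
    have e1 : A ^ κ = t ^ (κ/σ) := by
      rw [hAdef, ← Real.rpow_mul ht.le]
      congr 1; field_simp
    have e2 : A ^ (κ - σ) = t ^ (κ/σ - 1) := by
      rw [hAdef, ← Real.rpow_mul ht.le]
      congr 1; field_simp; try ring
    have e3 : t * t ^ (κ/σ - 1) = t ^ (κ/σ) := by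
      have h := (Real.rpow_add ht 1 (κ/σ - 1)).symm
      rw [Real.rpow_one] at h
      rw [show (1:ℝ) + (κ/σ - 1) = κ/σ by ring] at h
      exact h
    rw [e1, e2]
    have h := mul_le_mul_of_nonneg_left e3.le (show (0:ℝ) ≤ 2*K*κ/(σ-κ) by positivity)
    have heq : κ * (2*K*t)/(σ-κ) * t ^ (κ/σ - 1) = 2*K*κ/(σ-κ)*(t * t ^ (κ/σ - 1)) := by
      ring
    have heq2 : (1 + 2*K*κ/(σ-κ)) * t ^ (κ/σ) = t ^ (κ/σ) + 2*K*κ/(σ-κ) * t ^ (κ/σ) := by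
      ring
    rw [heq, heq2]
    linarith [h]
end

section
/- Let κ > 0 and ρ ∈ (0,1], and suppose there exist constants C₁ > 0 and C₂ ≥ 0 with φ(u) ≥ C₁ u^ρ for all u ≥ C₂. Then for all t > 0: E S_t^{-κ} = ∫ s^{-κ} μ_t(ds) ≤ C₂^κ/(κ·Γ(κ)) + Γ(κ/ρ)/(ρ·Γ(κ)·(t·C₁)^{κ/ρ}); in particular there is a constant C with E S_t^{-κ} ≤ C·(min(t,1))^{-κ/ρ} for all t > 0. If moreover φ(u) ≥ C₁ u^ρ holds for all u > 0 (i.e. C₂ = 0), then E S_t^{-κ} ≤ Γ(κ/ρ)/(ρ·Γ(κ)·C₁^{κ/ρ}) · t^{-κ/ρ} for all t > 0. -/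
open MeasureTheory Filter Set
open scoped ENNReal

lemma intOn_rpow_exp {a r : ℝ} (ha : 0 < a) (hr : 0 < r) :
    IntegrableOn (fun x : ℝ => x ^ (a - 1) * Real.exp (-(r * x))) (Set.Ioi 0) := by
  have h0 : IntegrableOn (fun x : ℝ => Real.exp (-x) * x ^ (a - 1)) (Set.Ioi 0) :=
    Real.GammaIntegral_convergent ha
  have h1 : IntegrableOn (fun x : ℝ => Real.exp (-(r*x)) * (r*x) ^ (a - 1)) (Set.Ioi 0) := by
    have := (integrableOn_Ioi_comp_mul_left_iff (fun x => Real.exp (-x) * x ^ (a - 1)) 0 hr).mpr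
    rw [mul_zero] at this; exact this h0
  have h2 : IntegrableOn (fun x : ℝ =>
      ((r:ℝ) ^ (a-1))⁻¹ * (Real.exp (-(r*x)) * (r*x) ^ (a - 1))) (Set.Ioi 0) :=
    h1.const_mul _
  apply IntegrableOn.congr_fun h2 ?_ measurableSet_Ioi
  intro x hx
  have hx0 : (0:ℝ) < x := hx
  show ((r:ℝ) ^ (a-1))⁻¹ * (Real.exp (-(r*x)) * (r*x) ^ (a - 1)) = x ^ (a-1) * Real.exp (-(r*x))
  rw [Real.mul_rpow hr.le hx0.le]
  field_simp [(Real.rpow_pos_of_pos hr (a-1)).ne']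

lemma intOn_rpow_exp_rpow {p q b : ℝ} (hp : 0 < p) (hq : -1 < q) (hb : 0 < b) :
    IntegrableOn (fun x : ℝ => x ^ q * Real.exp (-b * x ^ p)) (Set.Ioi 0) := by
  rw [← integrableOn_Ioi_comp_rpow_iff' _ (p := 1/p) (by positivity)]
  apply IntegrableOn.congr_fun
    (intOn_rpow_exp (a := (q+1)/p) (div_pos (by linarith) hp) hb) ?_ measurableSet_Ioi
  intro x hx
  have hx0 : (0:ℝ) < x := hx
  have h1 : (x ^ (1/p)) ^ p = x := by
    rw [← Real.rpow_mul hx0.le, one_div_mul_cancel hp.ne', Real.rpow_one]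
  have h2 : (x ^ (1/p)) ^ q = x ^ (q/p) := by
    rw [← Real.rpow_mul hx0.le]; ring_nf
  simp only [smul_eq_mul, h1, h2]
  have e : x ^ (1/p - 1) * x ^ (q/p) = x ^ ((q+1)/p - 1) := by
    rw [← Real.rpow_add hx0]; congr 1; field_simp; ring
  rw [← e, neg_mul]; ring

lemma key_bound (φ : ℝ → ℝ) (μt : Measure ℝ) [IsProbabilityMeasure μt]
    (hIic : μt (Set.Iic 0) = 0)
    (t κ ρ C₁ D : ℝ) (ht : 0 < t) (hκ : 0 < κ) (hρ0 : 0 < ρ)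
    (hC₁ : 0 < C₁) (hD : 0 ≤ D)
    (hLT : ∀ u > 0, ∫ s, Real.exp (-u * s) ∂μt = Real.exp (-t * φ u))
    (hφ0 : ∀ u > 0, 0 ≤ φ u)
    (hlow : ∀ u, D ≤ u → 0 < u → C₁ * u ^ ρ ≤ φ u) :
    ∫⁻ s, (ENNReal.ofReal s) ^ (-κ) ∂μt ≤ ENNReal.ofReal
      (D ^ κ / (κ * Real.Gamma κ)
        + Real.Gamma (κ / ρ) / (ρ * Real.Gamma κ * (t * C₁) ^ (κ / ρ))) := by
  have hΓ : 0 < Real.Gamma κ := Real.Gamma_pos_of_pos hκ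
  have haePos : ∀ᵐ s ∂μt, 0 < s := by
    rw [ae_iff]; simp only [not_lt]; exact hIic
  -- Laplace transform as a lintegral
  have step1 : ∀ u > 0, ∫⁻ s, ENNReal.ofReal (Real.exp (-u * s)) ∂μt
      = ENNReal.ofReal (Real.exp (-t * φ u)) := by
    intro u hu
    have hmeas : AEStronglyMeasurable (fun s : ℝ => Real.exp (-u * s)) μt :=
      Continuous.aestronglyMeasurable (by continuity)
    have hint : Integrable (fun s : ℝ => Real.exp (-u * s)) μt := by
      refine Integrable.mono' (integrable_const 1) hmeas ?_
      filter_upwards [haePos] with s hs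
      rw [Real.norm_eq_abs, abs_of_pos (Real.exp_pos _)]
      rw [Real.exp_le_one_iff]
      nlinarith
    rw [← hLT u hu,
      ← ofReal_integral_eq_lintegral_ofReal hint (ae_of_all _ fun s => (Real.exp_pos _).le)]
  -- Gamma identity pointwise in s
  have step2 : ∀ s : ℝ, 0 < s →
      (∫⁻ u in Set.Ioi 0, ENNReal.ofReal (u ^ (κ-1) * Real.exp (-u * s)))
        = ENNReal.ofReal (Real.Gamma κ * s ^ (-κ)) := by
    intro s hs
    have hint := intOn_rpow_exp hκ hs
    have h1 : (∫⁻ u in Set.Ioi 0, ENNReal.ofReal (u ^ (κ-1) * Real.exp (-u * s)))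
        = ∫⁻ u in Set.Ioi 0, ENNReal.ofReal (u ^ (κ-1) * Real.exp (-(s * u))) := by
      congr 1; funext u; ring_nf
    rw [h1, ← ofReal_integral_eq_lintegral_ofReal hint ?_]
    · rw [Real.integral_rpow_mul_exp_neg_mul_Ioi hκ hs]
      congr 1
      rw [Real.rpow_neg hs.le, ← Real.inv_rpow hs.le, one_div, mul_comm]
    · filter_upwards [self_mem_ae_restrict measurableSet_Ioi] with u hu
      have : (0:ℝ) < u := hu
      positivity
  -- measurability of the double integrand
  set f : ℝ → ℝ → ℝ≥0∞ := fun s u => ENNReal.ofReal (u ^ (κ-1) * Real.exp (-u * s)) with hfdef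
  have hmeasf : Measurable (Function.uncurry f) := by
    apply ENNReal.measurable_ofReal.comp
    exact (measurable_snd.pow_const (κ-1)).mul
      ((measurable_snd.neg.mul measurable_fst).exp)
  have hΓ0 : (ENNReal.ofReal (Real.Gamma κ)) ≠ 0 := by
    simp only [ne_eq, ENNReal.ofReal_eq_zero, not_le]; exact hΓ
  have hΓtop : (ENNReal.ofReal (Real.Gamma κ))⁻¹ ≠ ⊤ := ENNReal.inv_ne_top.mpr hΓ0
  have main : ∫⁻ s, (ENNReal.ofReal s) ^ (-κ) ∂μt
      = (ENNReal.ofReal (Real.Gamma κ))⁻¹ *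
        ∫⁻ u in Set.Ioi 0,
          ENNReal.ofReal (u ^ (κ-1)) * ENNReal.ofReal (Real.exp (-t * φ u)) := by
    have e1 : ∫⁻ s, (ENNReal.ofReal s) ^ (-κ) ∂μt
        = ∫⁻ s, ((ENNReal.ofReal (Real.Gamma κ))⁻¹ * ∫⁻ u in Set.Ioi 0, f s u) ∂μt := by
      apply lintegral_congr_ae
      filter_upwards [haePos] with s hs
      rw [hfdef]
      simp only
      rw [step2 s hs, ENNReal.ofReal_mul hΓ.le, ← mul_assoc,
        ENNReal.inv_mul_cancel hΓ0 ENNReal.ofReal_ne_top, one_mul]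
      exact ENNReal.ofReal_rpow_of_pos hs
    rw [e1, lintegral_const_mul' _ _ hΓtop, lintegral_lintegral_swap hmeasf.aemeasurable]
    congr 1
    apply setLIntegral_congr_fun measurableSet_Ioi
    intro u hu
    have hu0 : (0:ℝ) < u := hu
    have e2 : ∀ s : ℝ, f s u
        = ENNReal.ofReal (u ^ (κ-1)) * ENNReal.ofReal (Real.exp (-u * s)) := fun s =>
      ENNReal.ofReal_mul (Real.rpow_nonneg hu0.le _)
    simp only [e2]
    rw [lintegral_const_mul' _ _ ENNReal.ofReal_ne_top, step1 u hu0]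
  set g : ℝ → ℝ≥0∞ :=
    fun u => ENNReal.ofReal (u ^ (κ-1)) * ENNReal.ofReal (Real.exp (-t * φ u)) with hgdef
  have hsplit : ∫⁻ u in Set.Ioi 0, g u
      = (∫⁻ u in Set.Ioc 0 D, g u) + ∫⁻ u in Set.Ioi D, g u := by
    rw [← lintegral_union measurableSet_Ioi (Set.Ioc_disjoint_Ioi le_rfl),
      Set.Ioc_union_Ioi_eq_Ioi hD]
  -- bound on (0, D]
  have hiiD : IntegrableOn (fun u : ℝ => u ^ (κ-1)) (Set.Ioc 0 D) := by
    have h := intervalIntegral.intervalIntegrable_rpow' (a := 0) (b := D)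
      (by linarith : (-1:ℝ) < κ - 1)
    rwa [intervalIntegrable_iff, Set.uIoc_of_le hD] at h
  have hIocval : ∫ u in Set.Ioc 0 D, u ^ (κ-1) = D ^ κ / κ := by
    rw [← intervalIntegral.integral_of_le hD,
      integral_rpow (Or.inl (by linarith : (-1:ℝ) < κ - 1))]
    rw [Real.zero_rpow (by linarith : κ - 1 + 1 ≠ 0)]
    rw [sub_add_cancel]
    ring
  have boundA : ∫⁻ u in Set.Ioc 0 D, g u ≤ ENNReal.ofReal (D ^ κ / κ) := by
    calc ∫⁻ u in Set.Ioc 0 D, g u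
        ≤ ∫⁻ u in Set.Ioc 0 D, ENNReal.ofReal (u ^ (κ-1)) := by
          apply setLIntegral_mono' measurableSet_Ioc
          intro u hu
          apply mul_le_of_le_one_right'
          rw [ENNReal.ofReal_le_one, Real.exp_le_one_iff]
          have := hφ0 u hu.1
          nlinarith
      _ = ENNReal.ofReal (∫ u in Set.Ioc 0 D, u ^ (κ-1)) := by
          rw [← ofReal_integral_eq_lintegral_ofReal hiiD ?_]
          filter_upwards [self_mem_ae_restrict measurableSet_Ioc] with u hu
          exact Real.rpow_nonneg hu.1.le _
      _ = ENNReal.ofReal (D ^ κ / κ) := by rw [hIocval]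
  -- bound on (D, ∞)
  have htC : (0:ℝ) < t * C₁ := mul_pos ht hC₁
  have hintB : IntegrableOn (fun u : ℝ => u ^ (κ-1) * Real.exp (-(t*C₁) * u ^ ρ))
      (Set.Ioi 0) := intOn_rpow_exp_rpow hρ0 (by linarith) htC
  have hBval : ∫ u in Set.Ioi 0, u ^ (κ-1) * Real.exp (-(t*C₁) * u ^ ρ)
      = (t*C₁) ^ (-(κ/ρ)) * (1/ρ) * Real.Gamma (κ/ρ) := by
    rw [integral_rpow_mul_exp_neg_mul_rpow hρ0 (by linarith) htC, sub_add_cancel, neg_div]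
  have boundB : ∫⁻ u in Set.Ioi D, g u
      ≤ ENNReal.ofReal ((t*C₁) ^ (-(κ/ρ)) * (1/ρ) * Real.Gamma (κ/ρ)) := by
    calc ∫⁻ u in Set.Ioi D, g u
        ≤ ∫⁻ u in Set.Ioi D, ENNReal.ofReal (u ^ (κ-1) * Real.exp (-(t*C₁) * u ^ ρ)) := by
          apply setLIntegral_mono' measurableSet_Ioi
          intro u hu
          have hu0 : (0:ℝ) < u := lt_of_le_of_lt hD hu
          rw [ENNReal.ofReal_mul (Real.rpow_nonneg hu0.le _)]
          apply mul_le_mul_right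
          apply ENNReal.ofReal_le_ofReal
          apply Real.exp_le_exp.mpr
          have := hlow u (le_of_lt hu) hu0
          nlinarith
      _ ≤ ∫⁻ u in Set.Ioi 0, ENNReal.ofReal (u ^ (κ-1) * Real.exp (-(t*C₁) * u ^ ρ)) :=
          lintegral_mono_set (Set.Ioi_subset_Ioi hD)
      _ = ENNReal.ofReal ((t*C₁) ^ (-(κ/ρ)) * (1/ρ) * Real.Gamma (κ/ρ)) := by
          rw [← ofReal_integral_eq_lintegral_ofReal hintB ?_, hBval]
          filter_upwards [self_mem_ae_restrict measurableSet_Ioi] with u hu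
          have hu0 : (0:ℝ) < u := hu
          positivity
  have hA0 : 0 ≤ D ^ κ / κ := by positivity
  have hB0 : 0 ≤ (t*C₁) ^ (-(κ/ρ)) * (1/ρ) * Real.Gamma (κ/ρ) := by
    have := Real.Gamma_pos_of_pos (div_pos hκ hρ0)
    positivity
  calc ∫⁻ s, (ENNReal.ofReal s) ^ (-κ) ∂μt
      = (ENNReal.ofReal (Real.Gamma κ))⁻¹ *
        ((∫⁻ u in Set.Ioc 0 D, g u) + ∫⁻ u in Set.Ioi D, g u) := by rw [main, hsplit]
    _ ≤ (ENNReal.ofReal (Real.Gamma κ))⁻¹ *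
        (ENNReal.ofReal (D ^ κ / κ)
          + ENNReal.ofReal ((t*C₁) ^ (-(κ/ρ)) * (1/ρ) * Real.Gamma (κ/ρ))) :=
        mul_le_mul_right (add_le_add boundA boundB) _
    _ = ENNReal.ofReal ((D ^ κ / κ
          + (t*C₁) ^ (-(κ/ρ)) * (1/ρ) * Real.Gamma (κ/ρ)) / Real.Gamma κ) := by
        rw [ENNReal.ofReal_div_of_pos hΓ, ENNReal.div_eq_inv_mul, ENNReal.ofReal_add hA0 hB0]
    _ = ENNReal.ofReal (D ^ κ / (κ * Real.Gamma κ)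
          + Real.Gamma (κ / ρ) / (ρ * Real.Gamma κ * (t * C₁) ^ (κ / ρ))) := by
        congr 1
        rw [Real.rpow_neg htC.le]
        have h1 : ((t*C₁) : ℝ) ^ (κ/ρ) ≠ 0 := (Real.rpow_pos_of_pos htC _).ne'
        field_simp

/-- negative moment estimates for a subordinator.  Here
`(ENNReal.ofReal s) ^ (-κ)` equals `s^{-κ}` for `s > 0` and `∞` for `s ≤ 0`. -/
theorem subordinator_negative_moment_estimate
    (b : ℝ) (hb : 0 ≤ b)
    (ν : Measure ℝ) (hνsupp : ν (Set.Iic 0) = 0)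
    (hνint : ∫⁻ x, ENNReal.ofReal (min x 1) ∂ν < ⊤)
    (φ : ℝ → ℝ)
    (hφ : ∀ u > 0, φ u = b * u + ∫ x, (1 - Real.exp (-u * x)) ∂ν)
    (μ : ℝ → Measure ℝ)
    (hμprob : ∀ t > 0, IsProbabilityMeasure (μ t))
    (hμsupp : ∀ t > 0, μ t (Set.Iio 0) = 0)
    (hlaplace : ∀ t > 0, ∀ u > 0, ∫ s, Real.exp (-u * s) ∂(μ t) = Real.exp (-t * φ u))
    (κ ρ C₁ C₂ : ℝ) (hκ : 0 < κ) (hρ0 : 0 < ρ) (hρ1 : ρ ≤ 1)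
    (hC₁ : 0 < C₁) (hC₂ : 0 ≤ C₂)
    (hlow : ∀ u ≥ C₂, C₁ * u ^ ρ ≤ φ u) :
    (∀ t > 0,
      ∫⁻ s, (ENNReal.ofReal s) ^ (-κ) ∂(μ t) ≤ ENNReal.ofReal
        (C₂ ^ κ / (κ * Real.Gamma κ)
          + Real.Gamma (κ / ρ) / (ρ * Real.Gamma κ * (t * C₁) ^ (κ / ρ))))
    ∧ (∃ C > 0, ∀ t > 0,
      ∫⁻ s, (ENNReal.ofReal s) ^ (-κ) ∂(μ t) ≤
        ENNReal.ofReal (C * (min t 1) ^ (-(κ / ρ))))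
    ∧ ((∀ u > 0, C₁ * u ^ ρ ≤ φ u) → ∀ t > 0,
      ∫⁻ s, (ENNReal.ofReal s) ^ (-κ) ∂(μ t) ≤ ENNReal.ofReal
        (Real.Gamma (κ / ρ) / (ρ * Real.Gamma κ * C₁ ^ (κ / ρ)) * t ^ (-(κ / ρ)))) := by
  -- nonnegativity of φ
  have hφ0 : ∀ u > 0, 0 ≤ φ u := by
    intro u hu
    rw [hφ u hu]
    have h2 : 0 ≤ ∫ x, (1 - Real.exp (-u * x)) ∂ν := by
      apply integral_nonneg_of_ae
      rw [Filter.EventuallyLE, ae_iff]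
      apply measure_mono_null ?_ hνsupp
      intro x hx
      simp only [Set.mem_setOf_eq, not_le] at hx
      show x ≤ 0
      by_contra hc
      push_neg at hc
      have : Real.exp (-u * x) ≤ 1 := by
        rw [Real.exp_le_one_iff]; nlinarith
      simp only [Pi.zero_apply, Pi.sub_apply] at hx
      nlinarith
    nlinarith
  -- the support condition including 0
  have hIic : ∀ t > 0, μ t (Set.Iic 0) = 0 := by
    intro t ht
    haveI := hμprob t ht
    have haeNonneg : ∀ᵐ s ∂(μ t), 0 ≤ s := by
      rw [ae_iff]; simp only [not_le]; exact hμsupp t ht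
    have hzero : μ t {0} = 0 := by
      by_contra h
      have hε : 0 < (μ t {0}).toReal :=
        ENNReal.toReal_pos h (measure_ne_top _ _)
      -- lower bound for the Laplace transform
      have hlb : ∀ u : ℝ, C₂ ≤ u → 0 < u →
          (μ t {0}).toReal ≤ Real.exp (-(t*C₁) * u ^ ρ) := by
        intro u huC hu
        have hmeas : AEStronglyMeasurable (fun s : ℝ => Real.exp (-u * s)) (μ t) :=
          Continuous.aestronglyMeasurable (by continuity)
        have hint : Integrable (fun s : ℝ => Real.exp (-u * s)) (μ t) := by
          refine Integrable.mono' (integrable_const 1) hmeas ?_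
          filter_upwards [haeNonneg] with s hs
          rw [Real.norm_eq_abs, abs_of_pos (Real.exp_pos _), Real.exp_le_one_iff]
          nlinarith
        have h1 : ∫ s in ({0} : Set ℝ), Real.exp (-u * s) ∂(μ t)
            ≤ ∫ s, Real.exp (-u * s) ∂(μ t) :=
          setIntegral_le_integral hint (ae_of_all _ fun s => (Real.exp_pos _).le)
        rw [integral_singleton] at h1
        simp only [mul_zero, Real.exp_zero, smul_eq_mul, mul_one] at h1
        rw [hlaplace t ht u hu] at h1
        calc (μ t {0}).toReal ≤ Real.exp (-t * φ u) := h1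
          _ ≤ Real.exp (-(t*C₁) * u ^ ρ) := by
              apply Real.exp_le_exp.mpr
              have := hlow u huC
              nlinarith
      have htend : Filter.Tendsto (fun u : ℝ => Real.exp (-(t*C₁) * u ^ ρ))
          Filter.atTop (nhds 0) := by
        have h1 : Filter.Tendsto (fun u : ℝ => (t*C₁) * u ^ ρ) Filter.atTop Filter.atTop :=
          Filter.Tendsto.const_mul_atTop (by positivity) (tendsto_rpow_atTop hρ0)
        have h2 : Filter.Tendsto (fun u : ℝ => -(t*C₁) * u ^ ρ) Filter.atTop Filter.atBot := by
          simp only [neg_mul]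
          exact tendsto_neg_atTop_atBot.comp h1
        exact Real.tendsto_exp_atBot.comp h2
      have hev : ∀ᶠ u in Filter.atTop, Real.exp (-(t*C₁) * u ^ ρ) < (μ t {0}).toReal :=
        htend.eventually_lt_const hε
      obtain ⟨u, hu1, hu2⟩ :=
        (hev.and (Filter.eventually_ge_atTop (max C₂ 1))).exists
      have := hlb u (le_trans (le_max_left _ _) hu2)
        (lt_of_lt_of_le one_pos (le_trans (le_max_right _ _) hu2))
      linarith
    have : Set.Iic (0:ℝ) = Set.Iio 0 ∪ {0} := by
      ext x; simp [le_iff_lt_or_eq]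
    rw [this]
    exact le_antisymm (le_trans (measure_union_le _ _)
      (by rw [hμsupp t ht, hzero]; simp)) zero_le
  have hΓκρ : 0 < Real.Gamma (κ/ρ) := Real.Gamma_pos_of_pos (div_pos hκ hρ0)
  have hΓκ : 0 < Real.Gamma κ := Real.Gamma_pos_of_pos hκ
  -- Part 1
  have part1 : ∀ t > 0,
      ∫⁻ s, (ENNReal.ofReal s) ^ (-κ) ∂(μ t) ≤ ENNReal.ofReal
        (C₂ ^ κ / (κ * Real.Gamma κ)
          + Real.Gamma (κ / ρ) / (ρ * Real.Gamma κ * (t * C₁) ^ (κ / ρ))) := by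
    intro t ht
    haveI := hμprob t ht
    exact key_bound φ (μ t) (hIic t ht) t κ ρ C₁ C₂ ht hκ hρ0 hC₁ hC₂
      (hlaplace t ht) hφ0 (fun u hu _ => hlow u hu)
  refine ⟨part1, ?_, ?_⟩
  · -- Part 2
    set A := C₂ ^ κ / (κ * Real.Gamma κ) with hA
    set B := Real.Gamma (κ / ρ) / (ρ * Real.Gamma κ * C₁ ^ (κ / ρ)) with hB
    have hA0 : 0 ≤ A := by
      have : (0:ℝ) ≤ C₂ ^ κ := Real.rpow_nonneg hC₂ _
      positivity
    have hB0 : 0 ≤ B := by positivity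
    refine ⟨A + B + 1, by positivity, ?_⟩
    intro t ht
    refine le_trans (part1 t ht) (ENNReal.ofReal_le_ofReal ?_)
    set m := min t 1 with hm
    have hm0 : 0 < m := lt_min ht one_pos
    have hm1 : m ≤ 1 := min_le_right _ _
    have hmt : m ≤ t := min_le_left _ _
    have hP1 : 1 ≤ m ^ (-(κ/ρ)) :=
      Real.one_le_rpow_of_pos_of_le_one_of_nonpos hm0 hm1 (neg_nonpos.mpr (by positivity))
    have hP3 : t ^ (-(κ/ρ)) ≤ m ^ (-(κ/ρ)) :=
      Real.rpow_le_rpow_of_nonpos hm0 hmt (neg_nonpos.mpr (by positivity))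
    have h2 : Real.Gamma (κ / ρ) / (ρ * Real.Gamma κ * (t * C₁) ^ (κ / ρ))
        = B * t ^ (-(κ/ρ)) := by
      rw [hB, Real.mul_rpow ht.le hC₁.le, Real.rpow_neg ht.le,
        show ρ * Real.Gamma κ * (t ^ (κ/ρ) * C₁ ^ (κ/ρ))
          = ρ * Real.Gamma κ * C₁ ^ (κ/ρ) * t ^ (κ/ρ) by ring,
        ← div_div, div_eq_mul_inv]
    rw [h2]
    nlinarith [mul_le_mul_of_nonneg_left hP1 hA0, mul_le_mul_of_nonneg_left hP3 hB0,
      le_trans zero_le_one hP1]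
  · -- Part 3
    intro hlow' t ht
    haveI := hμprob t ht
    have key := key_bound φ (μ t) (hIic t ht) t κ ρ C₁ 0 ht hκ hρ0 hC₁ le_rfl
      (hlaplace t ht) hφ0 (fun u _ hu0 => hlow' u hu0)
    refine le_trans key (le_of_eq ?_)
    congr 1
    rw [Real.zero_rpow hκ.ne', zero_div, zero_add, Real.mul_rpow ht.le hC₁.le,
      Real.rpow_neg ht.le,
      show ρ * Real.Gamma κ * (t ^ (κ/ρ) * C₁ ^ (κ/ρ))
        = ρ * Real.Gamma κ * C₁ ^ (κ/ρ) * t ^ (κ/ρ) by ring,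
      ← div_div, div_eq_mul_inv]
end

section
/- Let κ > 0 and ρ ∈ (κ/(1+κ), 1], and suppose there exist constants C₁ > 0 and C₂ ≥ 0 with φ(u) ≥ C₁ u^ρ for all u ≥ C₂. Then there exists a constant C (depending only on κ, ρ, C₁, C₂) such that for all λ > 0 and t > 0: E e^{λ S_t^{-κ}} = ∫ e^{λ s^{-κ}} μ_t(ds) ≤ exp[ C·( λ + (λ/t^{κ/ρ})^{ρ/(ρ-(1-ρ)κ)} + λ/t^{κ/ρ} ) ]. In particular, for each fixed λ > 0 there is a constant C' with E e^{λ S_t^{-κ}} ≤ exp[ C'·(min(t,1))^{-κ/(ρ-(1-ρ)κ)} ] for all t > 0. If moreover φ(u) ≥ C₁ u^ρ holds for all u > 0 (C₂ = 0), then the term C·λ can be omitted: E e^{λ S_t^{-κ}} ≤ exp[ C·( (λ/t^{κ/ρ})^{ρ/(ρ-(1-ρ)κ)} + λ/t^{κ/ρ} ) ] for all λ, t > 0. -/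
open MeasureTheory Filter Set
open scoped ENNReal Classical

lemma young_aux {n D γ w : ℝ} (hn : 0 < n) (hD : 0 < D) (hγ : 1 < γ) (hw : 0 ≤ w) :
    n * w ≤ n * (n / D) ^ (1 / (γ - 1)) + D * w ^ γ := by
  set w₀ : ℝ := (n / D) ^ (1 / (γ - 1)) with hw₀
  have hw₀pos : 0 < w₀ := Real.rpow_pos_of_pos (div_pos hn hD) _
  rcases le_or_gt w w₀ with h | h
  · have : 0 ≤ D * w ^ γ := mul_nonneg hD.le (Real.rpow_nonneg hw _)
    nlinarith [mul_le_mul_of_nonneg_left h hn.le]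
  · have hwpos : 0 < w := hw₀pos.trans h
    have key : n * w ≤ D * w ^ γ := by
      have h1 : w ^ γ = w ^ (γ - 1) * w := by
        rw [← Real.rpow_add_one hwpos.ne']; ring_nf
      have h2 : w₀ ^ (γ - 1) ≤ w ^ (γ - 1) :=
        Real.rpow_le_rpow hw₀pos.le h.le (by linarith)
      have h3 : w₀ ^ (γ - 1) = n / D := by
        rw [hw₀, ← Real.rpow_mul (div_pos hn hD).le, one_div,
          inv_mul_cancel₀ (by linarith : γ - 1 ≠ 0), Real.rpow_one]
      have h4 : D * (w₀ ^ (γ - 1) * w) = n * w := by rw [h3]; field_simp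
      calc n * w = D * (w₀ ^ (γ - 1) * w) := h4.symm
        _ ≤ D * (w ^ (γ - 1) * w) := by
            apply mul_le_mul_of_nonneg_left _ hD.le
            exact mul_le_mul_of_nonneg_right h2 hwpos.le
        _ = D * w ^ γ := by rw [← h1]
    have : 0 ≤ n * w₀ := mul_nonneg hn.le hw₀pos.le
    linarith

lemma null0_aux (m : Measure ℝ) (t C₁ ρ c₂ : ℝ) (ht : 0 < t) (hC₁ : 0 < C₁) (hρ : 0 < ρ)
    (SB : ∀ u, c₂ ≤ u → 0 < u → ∀ x : ℝ,
      m (Set.Iic x) ≤ ENNReal.ofReal (Real.exp (u * x - t * (C₁ * u ^ ρ)))) :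
    m (Set.Iic 0) = 0 := by
  have hlim : Tendsto (fun u : ℝ => ENNReal.ofReal (Real.exp (u * 0 - t * (C₁ * u ^ ρ))))
      atTop (nhds 0) := by
    have h1 : Tendsto (fun u : ℝ => u ^ ρ) atTop atTop := tendsto_rpow_atTop hρ
    have h2 : Tendsto (fun u : ℝ => u * 0 - t * (C₁ * u ^ ρ)) atTop atBot := by
      have h2' : Tendsto (fun u : ℝ => (t * C₁) * u ^ ρ) atTop atTop :=
        h1.const_mul_atTop (mul_pos ht hC₁)
      exact (tendsto_neg_atTop_atBot.comp h2').congr fun u => by simp; ring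
    have h3 : Tendsto (fun u : ℝ => Real.exp (u * 0 - t * (C₁ * u ^ ρ))) atTop (nhds 0) :=
      Real.tendsto_exp_atBot.comp h2
    simpa [Function.comp_def] using (ENNReal.continuous_ofReal.tendsto 0).comp h3
  have hev : ∀ᶠ u in (atTop : Filter ℝ), m (Set.Iic 0) ≤
      ENNReal.ofReal (Real.exp (u * 0 - t * (C₁ * u ^ ρ))) := by
    filter_upwards [eventually_ge_atTop (max c₂ 1)] with u hu
    exact SB u (le_trans (le_max_left _ _) hu)
      (lt_of_lt_of_le one_pos (le_trans (le_max_right _ _) hu)) 0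
  exact le_zero_iff.mp (ge_of_tendsto hlim hev)

set_option maxHeartbeats 2000000 in
lemma core_aux (κ ρ C₁ c₂ : ℝ) (hκ : 0 < κ) (hρl : κ / (1 + κ) < ρ) (hρ1 : ρ ≤ 1)
    (hC₁ : 0 < C₁) (hc₂ : 0 ≤ c₂) :
    ∃ K > 0, ∀ t : ℝ, 0 < t → ∀ l : ℝ, 0 < l → ∀ m : Measure ℝ, IsProbabilityMeasure m →
      (∀ u, c₂ ≤ u → 0 < u → ∀ x : ℝ,
        m (Set.Iic x) ≤ ENNReal.ofReal (Real.exp (u * x - t * (C₁ * u ^ ρ)))) →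
      ∫⁻ s, (if s ≤ 0 then (⊤ : ℝ≥0∞) else ENNReal.ofReal (Real.exp (l * s ^ (-κ)))) ∂m ≤
        ENNReal.ofReal (Real.exp (K * ((l / t ^ (κ / ρ)) ^ (ρ / (ρ - (1 - ρ) * κ))
          + l / t ^ (κ / ρ)) + l * (2 * c₂ ^ (1 - ρ)) ^ κ / (t * C₁) ^ κ)) := by
  have hρ0 : 0 < ρ := lt_trans (by positivity) hρl
  have h1κ : (0:ℝ) < 1 + κ := by linarith
  have hδ : 0 < ρ - (1 - ρ) * κ := by
    have := (div_lt_iff₀ h1κ).mp hρl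
    nlinarith
  set δ : ℝ := ρ - (1 - ρ) * κ with hδdef
  set K₁ : ℝ := 2 ^ (ρ / δ) * (2 / C₁) ^ (κ / δ) with hK₁def
  have hK₁ : 0 < K₁ := by positivity
  refine ⟨1 + C₁ ^ (-κ) + K₁ + Real.exp K₁, by positivity, ?_⟩
  set K : ℝ := 1 + C₁ ^ (-κ) + K₁ + Real.exp K₁ with hKdef
  intro t ht l hl m hm SB
  -- basic quantities
  set X : ℝ := l / t ^ (κ / ρ) with hXdef
  have hX : 0 < X := by positivity
  set B : ℝ := X ^ (ρ / δ) with hBdef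
  have hB : 0 < B := Real.rpow_pos_of_pos hX _
  set M : ℝ := min X 1 with hMdef
  have hM0 : 0 < M := lt_min hX one_pos
  have hM1 : M ≤ 1 := min_le_right _ _
  set n : ℝ := 1 + 1 / M with hndef
  have hn1 : (1:ℝ) < n := by
    have : 0 < 1 / M := by positivity
    simp only [hndef]; linarith
  have hn2 : n ≤ 2 / M := by
    have : n = (M + 1) / M := by rw [hndef]; field_simp
    rw [this, div_le_div_iff₀ hM0 hM0]
    nlinarith
  have hninv : 1 / (n - 1) = M := by
    rw [hndef]; field_simp; ring
  set wc : ℝ := l * (2 * c₂ ^ (1 - ρ)) ^ κ / (t * C₁) ^ κ with hwcdef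
  have hwc : 0 ≤ wc := by positivity
  set Wc : ℝ := max (max X wc) (C₁ ^ (-κ) * X) with hWcdef
  have hWcX : X ≤ Wc := le_trans (le_max_left _ _) (le_max_left _ _)
  have hWc0 : 0 < Wc := lt_of_lt_of_le hX hWcX
  have hCκ : 0 ≤ C₁ ^ (-κ) * X := by positivity
  have hWcle : Wc ≤ X + wc + C₁ ^ (-κ) * X := by
    have h1 : max X wc ≤ X + wc := max_le (by linarith) (by linarith)
    exact max_le (by linarith) (by linarith)
  set E : ℝ := Real.exp Wc with hEdef
  have hE1 : 1 < E := by
    rw [hEdef, ← Real.exp_zero]; exact Real.exp_lt_exp.mpr hWc0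
  have hE0 : 0 < E := lt_trans one_pos hE1
  -- a.e. positivity and rewriting of the integrand
  have hm0 : m (Set.Iic 0) = 0 := null0_aux m t C₁ ρ c₂ ht hC₁ hρ0 SB
  have hae : ∀ᵐ s ∂m, 0 < s := by
    rw [ae_iff]
    have : {s : ℝ | ¬ 0 < s} = Set.Iic 0 := by ext s; simp [not_lt]
    rw [this]; exact hm0
  set f : ℝ → ℝ := fun s => Real.exp (l * s ^ (-κ)) with hfdef
  have hfm : Measurable f := (measurable_const.mul (measurable_id.pow measurable_const)).exp
  have hI : ∫⁻ s, (if s ≤ 0 then (⊤ : ℝ≥0∞) else ENNReal.ofReal (Real.exp (l * s ^ (-κ)))) ∂m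
      = ∫⁻ s, ENNReal.ofReal (f s) ∂m := by
    refine lintegral_congr_ae ?_
    filter_upwards [hae] with s hs
    rw [if_neg (not_le.mpr hs)]
  have hlc : ∫⁻ s, ENNReal.ofReal (f s) ∂m = ∫⁻ y in Set.Ioi 0, m {s : ℝ | y < f s} :=
    lintegral_eq_lintegral_meas_lt m (Eventually.of_forall fun s => (Real.exp_pos _).le)
      hfm.aemeasurable
  -- membership of superlevel sets in small balls
  have hsub : ∀ y : ℝ, 1 < y → m {s : ℝ | y < f s} ≤ m (Set.Iic ((l / Real.log y) ^ (1/κ))) := by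
    intro y hy
    have hw : 0 < Real.log y := Real.log_pos hy
    set w : ℝ := Real.log y
    set x : ℝ := (l / w) ^ (1/κ) with hxdef
    have hsubset : {s : ℝ | y < f s} ⊆ Set.Iic 0 ∪ Set.Iic x := by
      intro s hs
      rcases le_or_gt s 0 with h | h
      · exact Or.inl h
      · right
        have h1 : w < l * s ^ (-κ) := (Real.log_lt_iff_lt_exp (by linarith)).mpr hs
        have hsκ : 0 < s ^ κ := Real.rpow_pos_of_pos h κ
        rw [Real.rpow_neg h.le, ← div_eq_mul_inv] at h1
        have h4 := (lt_div_iff₀ hsκ).mp h1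
        have h3 : s ^ κ < l / w := by rw [lt_div_iff₀ hw]; nlinarith
        have h5 : (s ^ κ) ^ (1/κ) ≤ (l / w) ^ (1/κ) :=
          Real.rpow_le_rpow hsκ.le h3.le (by positivity)
        rwa [← Real.rpow_mul h.le, mul_one_div_cancel hκ.ne', Real.rpow_one] at h5
    calc m {s : ℝ | y < f s} ≤ m (Set.Iic 0 ∪ Set.Iic x) := measure_mono hsubset
      _ ≤ m (Set.Iic 0) + m (Set.Iic x) := measure_union_le _ _
      _ = m (Set.Iic x) := by rw [hm0, zero_add]
  -- the key tail estimate
  have key1 : ∃ S : ℝ, S ≤ K₁ * (1 + B) ∧ ∀ y : ℝ, E < y →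
      m {s : ℝ | y < f s} ≤ ENNReal.ofReal (Real.exp S * y ^ (-n)) := by
    rcases lt_or_eq_of_le hρ1 with hρlt | hρeq
    · -- case ρ < 1
      have h1ρ : 0 < 1 - ρ := by linarith
      set γ : ℝ := ρ / (κ * (1 - ρ)) with hγdef
      have hγ1 : 1 < γ := by
        rw [hγdef, lt_div_iff₀ (by positivity)]
        rw [hδdef] at hδ; nlinarith
      set D : ℝ := (t * C₁ / 2) ^ (1 / (1 - ρ)) * l ^ (-γ) with hDdef
      have hD : 0 < D := by positivity
      set S : ℝ := n * (n / D) ^ (1 / (γ - 1)) with hSdef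
      refine ⟨S, ?_, ?_⟩
      · -- S ≤ K₁ * (1 + B)
        have hγm1 : γ - 1 = δ / (κ * (1 - ρ)) := by
          rw [hγdef, hδdef]; field_simp
        have hγinv : 1 / (γ - 1) = κ * (1 - ρ) / δ := by
          rw [hγm1, one_div_div]
        have hDe : D ^ (κ * (1 - ρ) / δ) = (t * C₁ / 2) ^ (κ / δ) * l ^ (-(ρ / δ)) := by
          rw [hDdef, Real.mul_rpow (by positivity) (by positivity),
            ← Real.rpow_mul (by positivity), ← Real.rpow_mul hl.le]
          congr 2
          · field_simp
          · rw [hγdef]; field_simp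
        have hnD : (n / D) ^ (1 / (γ - 1)) =
            n ^ (κ * (1 - ρ) / δ) * ((t * C₁ / 2) ^ (κ / δ))⁻¹ * l ^ (ρ / δ) := by
          rw [hγinv, Real.div_rpow (by linarith : (0:ℝ) ≤ n) hD.le, hDe,
            Real.rpow_neg hl.le, div_eq_mul_inv, mul_inv, inv_inv]
          ring
        have hexp1 : n * n ^ (κ * (1 - ρ) / δ) = n ^ (ρ / δ) := by
          nth_rewrite 1 [show n = n ^ (1:ℝ) by rw [Real.rpow_one]]
          rw [← Real.rpow_add (by linarith : (0:ℝ) < n)]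
          congr 1
          rw [eq_div_iff hδ.ne', add_mul, div_mul_cancel₀ _ hδ.ne', hδdef]; ring
        have hSeq : S = n ^ (ρ / δ) * (((t * C₁ / 2) ^ (κ / δ))⁻¹ * l ^ (ρ / δ)) := by
          rw [hSdef, hnD, ← mul_assoc, ← mul_assoc, hexp1]; ring
        have h2t : ((t * C₁ / 2) ^ (κ / δ))⁻¹ = (2 / C₁) ^ (κ / δ) * (t ^ (κ / δ))⁻¹ := by
          have hinv : (t * C₁ / 2)⁻¹ = (2 / C₁) * t⁻¹ := by
            field_simp
          rw [← Real.inv_rpow (by positivity), hinv,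
            Real.mul_rpow (by positivity) (by positivity), Real.inv_rpow ht.le]
        have hBeq : l ^ (ρ / δ) * (t ^ (κ / δ))⁻¹ = B := by
          have hexpeq : κ / ρ * (ρ / δ) = κ / δ := by
            field_simp
          calc l ^ (ρ / δ) * (t ^ (κ / δ))⁻¹
              = l ^ (ρ / δ) / t ^ (κ / δ) := (div_eq_mul_inv (l ^ (ρ / δ)) (t ^ (κ / δ))).symm
            _ = l ^ (ρ / δ) / (t ^ (κ / ρ)) ^ (ρ / δ) := by
                rw [← Real.rpow_mul ht.le, hexpeq]
            _ = (l / t ^ (κ / ρ)) ^ (ρ / δ) :=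
                (Real.div_rpow hl.le (Real.rpow_nonneg ht.le (κ / ρ)) (ρ / δ)).symm
            _ = B := by rw [hBdef, hXdef]
        have hSeq2 : S = n ^ (ρ / δ) * (2 / C₁) ^ (κ / δ) * B := by
          rw [hSeq, h2t, ← hBeq]; ring
        have hn3 : n ^ (ρ / δ) ≤ (2 / M) ^ (ρ / δ) :=
          Real.rpow_le_rpow (by linarith) hn2 (by positivity)
        have hXM : X / M = max X 1 := by
          rcases le_total X 1 with h | h
          · rw [hMdef, min_eq_left h, max_eq_right h, div_self hX.ne']
          · rw [hMdef, min_eq_right h, max_eq_left h, div_one]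
        have h2M : (2 / M) ^ (ρ / δ) * B = 2 ^ (ρ / δ) * (max X 1) ^ (ρ / δ) := by
          calc (2 / M) ^ (ρ / δ) * B = (2 * M⁻¹) ^ (ρ / δ) * X ^ (ρ / δ) := by
                rw [div_eq_mul_inv, hBdef]
            _ = 2 ^ (ρ / δ) * (M⁻¹) ^ (ρ / δ) * X ^ (ρ / δ) := by
                rw [Real.mul_rpow (by norm_num) (by positivity)]
            _ = 2 ^ (ρ / δ) * (M⁻¹ * X) ^ (ρ / δ) := by
                rw [Real.mul_rpow (by positivity) hX.le]; ring
            _ = 2 ^ (ρ / δ) * (max X 1) ^ (ρ / δ) := by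
                rw [show M⁻¹ * X = X / M by ring, hXM]
        have hmax : (max X 1) ^ (ρ / δ) ≤ 1 + B := by
          rcases le_total X 1 with h | h
          · rw [max_eq_right h, Real.one_rpow]; linarith
          · rw [max_eq_left h, ← hBdef]; linarith
        calc S = n ^ (ρ / δ) * (2 / C₁) ^ (κ / δ) * B := hSeq2
          _ ≤ (2 / M) ^ (ρ / δ) * (2 / C₁) ^ (κ / δ) * B := by
              have h0 : (0:ℝ) ≤ (2 / C₁) ^ (κ / δ) := by positivity
              exact mul_le_mul_of_nonneg_right (mul_le_mul_of_nonneg_right hn3 h0) hB.le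
          _ = (2 / C₁) ^ (κ / δ) * ((2 / M) ^ (ρ / δ) * B) := by ring
          _ = (2 / C₁) ^ (κ / δ) * (2 ^ (ρ / δ) * (max X 1) ^ (ρ / δ)) := by rw [h2M]
          _ ≤ (2 / C₁) ^ (κ / δ) * (2 ^ (ρ / δ) * (1 + B)) := by
              have h0 : (0:ℝ) ≤ (2 / C₁) ^ (κ / δ) := by positivity
              have h1 : (0:ℝ) ≤ (2:ℝ) ^ (ρ / δ) := by positivity
              exact mul_le_mul_of_nonneg_left (mul_le_mul_of_nonneg_left hmax h1) h0
          _ = K₁ * (1 + B) := by rw [hK₁def]; ring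
      · -- the tail bound
        intro y hy
        have hy1 : 1 < y := lt_trans hE1 hy
        have hw : 0 < Real.log y := Real.log_pos hy1
        set w : ℝ := Real.log y with hwdef
        have hwW : Wc < w := by
          rw [hwdef, ← Real.log_exp Wc]
          exact Real.log_lt_log hE0 hy
        set x : ℝ := (l / w) ^ (1 / κ) with hxdef
        have hx : 0 < x := Real.rpow_pos_of_pos (by positivity) _
        set u : ℝ := (t * C₁ / (2 * x)) ^ (1 / (1 - ρ)) with hudef
        have hu : 0 < u := Real.rpow_pos_of_pos (by positivity) _
        have hc₂u : c₂ ≤ u := by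
          rcases eq_or_lt_of_le hc₂ with h0 | h0
          · rw [← h0]; exact hu.le
          · have hq : (0:ℝ) < 2 * c₂ ^ (1 - ρ) := by positivity
            have hwwc : wc < w :=
              lt_of_le_of_lt (le_trans (le_max_right X wc) (le_max_left _ _)) hwW
            have h2 : l / w ≤ (t * C₁ / (2 * c₂ ^ (1 - ρ))) ^ κ := by
              rw [Real.div_rpow (by positivity) hq.le, div_le_div_iff₀ hw (by positivity)]
              have hA : (0:ℝ) < (t * C₁) ^ κ := Real.rpow_pos_of_pos (by positivity) κ
              have hwc' : wc * (t * C₁) ^ κ = l * (2 * c₂ ^ (1 - ρ)) ^ κ := by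
                rw [hwcdef]; field_simp
              calc l * (2 * c₂ ^ (1 - ρ)) ^ κ = wc * (t * C₁) ^ κ := hwc'.symm
                _ ≤ w * (t * C₁) ^ κ := mul_le_mul_of_nonneg_right hwwc.le hA.le
                _ = (t * C₁) ^ κ * w := mul_comm _ _
            have h3 : x ≤ t * C₁ / (2 * c₂ ^ (1 - ρ)) := by
              have h5 := Real.rpow_le_rpow (by positivity) h2 (by positivity : (0:ℝ) ≤ 1 / κ)
              rwa [← Real.rpow_mul (by positivity), mul_one_div_cancel hκ.ne',
                Real.rpow_one] at h5
            have h4 : c₂ ^ (1 - ρ) ≤ t * C₁ / (2 * x) := by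
              have h5 := (le_div_iff₀ hq).mp h3
              rw [le_div_iff₀ (by positivity : (0:ℝ) < 2 * x)]
              calc c₂ ^ (1 - ρ) * (2 * x) = x * (2 * c₂ ^ (1 - ρ)) := by ring
                _ ≤ t * C₁ := h5
            calc c₂ = (c₂ ^ (1 - ρ)) ^ (1 / (1 - ρ)) := by
                  rw [← Real.rpow_mul hc₂, mul_one_div_cancel h1ρ.ne', Real.rpow_one]
              _ ≤ u := Real.rpow_le_rpow (Real.rpow_nonneg hc₂ _) h4 (by positivity)
        -- exponent computation
        have hux : u ^ (1 - ρ) = t * C₁ / (2 * x) := by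
          rw [hudef, ← Real.rpow_mul (by positivity), one_div,
            inv_mul_cancel₀ h1ρ.ne', Real.rpow_one]
        have huu : u ^ ρ * u ^ (1 - ρ) = u := by
          rw [← Real.rpow_add hu, show ρ + (1 - ρ) = 1 by ring, Real.rpow_one]
        have hx1a : u * x = t * C₁ / 2 * u ^ ρ := by
          calc u * x = u ^ ρ * u ^ (1 - ρ) * x := by rw [huu]
            _ = u ^ ρ * (t * C₁ / (2 * x)) * x := by rw [hux]
            _ = t * C₁ / 2 * u ^ ρ := by field_simp
        have hx2 : t * C₁ / 2 * u ^ ρ = D * w ^ γ := by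
          have ha : u ^ ρ = (t * C₁ / (2 * x)) ^ (ρ / (1 - ρ)) := by
            rw [hudef, ← Real.rpow_mul (by positivity)]
            congr 1
            field_simp
          have hb : (t * C₁ / (2 * x)) ^ (ρ / (1 - ρ)) =
              (t * C₁ / 2) ^ (ρ / (1 - ρ)) * (x ^ (ρ / (1 - ρ)))⁻¹ := by
            rw [show t * C₁ / (2 * x) = (t * C₁ / 2) / x by ring,
              Real.div_rpow (by positivity) hx.le, div_eq_mul_inv]
          have hc : x ^ (ρ / (1 - ρ)) = (l / w) ^ γ := by
            rw [hxdef, ← Real.rpow_mul (by positivity), hγdef]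
            congr 1
            field_simp
            try ring
          have hd : ((l / w) ^ γ)⁻¹ = w ^ γ * l ^ (-γ) := by
            rw [Real.div_rpow hl.le hw.le, Real.rpow_neg hl.le]
            field_simp
          have he : t * C₁ / 2 * (t * C₁ / 2) ^ (ρ / (1 - ρ)) =
              (t * C₁ / 2) ^ ((1:ℝ) + ρ / (1 - ρ)) := by
            rw [Real.rpow_add (by positivity), Real.rpow_one]
          have hf2 : (1:ℝ) + ρ / (1 - ρ) = 1 / (1 - ρ) := by field_simp; ring
          calc t * C₁ / 2 * u ^ ρ
              = t * C₁ / 2 * (t * C₁ / 2) ^ (ρ / (1 - ρ)) * ((l / w) ^ γ)⁻¹ := by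
                rw [ha, hb, hc]; ring
            _ = (t * C₁ / 2) ^ (1 / (1 - ρ)) * (w ^ γ * l ^ (-γ)) := by
                rw [hd, he, hf2]
            _ = D * w ^ γ := by rw [hDdef]; ring
        have hyoung := young_aux (show (0:ℝ) < n by linarith) hD hγ1 hw.le
        have hexp : u * x - t * (C₁ * u ^ ρ) ≤ S - n * w := by
          have h6 : u * x - t * (C₁ * u ^ ρ) = -(D * w ^ γ) := by
            have h6a : t * (C₁ * u ^ ρ) = 2 * (t * C₁ / 2 * u ^ ρ) := by ring
            rw [hx1a, h6a, hx2]
            ring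
          rw [h6, hSdef]
          linarith
        calc m {s : ℝ | y < f s} ≤ m (Set.Iic ((l / Real.log y) ^ (1 / κ))) := hsub y hy1
          _ ≤ ENNReal.ofReal (Real.exp (u * x - t * (C₁ * u ^ ρ))) := SB u hc₂u hu x
          _ ≤ ENNReal.ofReal (Real.exp S * y ^ (-n)) := by
              refine ENNReal.ofReal_le_ofReal ?_
              have h7 : Real.exp S * y ^ (-n) = Real.exp (S - n * w) := by
                rw [Real.rpow_def_of_pos (by positivity : (0:ℝ) < y), ← Real.exp_add, hwdef]
                congr 1
                ring
              rw [h7]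
              exact Real.exp_le_exp.mpr hexp
    · -- case ρ = 1
      refine ⟨K₁ * (1 + B), le_rfl, fun y hy => ?_⟩
      have hy1 : 1 < y := lt_trans hE1 hy
      have hw : 0 < Real.log y := Real.log_pos hy1
      set w : ℝ := Real.log y with hwdef
      have hwW : Wc < w := by
        rw [hwdef, ← Real.log_exp Wc]
        exact Real.log_lt_log hE0 hy
      set x : ℝ := (l / w) ^ (1 / κ) with hxdef
      have hxlt : x < t * C₁ := by
        have h1 : C₁ ^ (-κ) * X < w := lt_of_le_of_lt (le_max_right _ _) hwW
        have hXκ : X = l / t ^ κ := by rw [hXdef, hρeq, div_one]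
        have h2 : C₁ ^ (-κ) * X = l / (t * C₁) ^ κ := by
          rw [hXκ, Real.mul_rpow ht.le hC₁.le, Real.rpow_neg hC₁.le,
            div_eq_mul_inv, div_eq_mul_inv, mul_inv]
          ring
        have h3 : l / w < (t * C₁) ^ κ := by
          rw [h2] at h1
          have h4 := (div_lt_iff₀ (Real.rpow_pos_of_pos (by positivity : (0:ℝ) < t * C₁) κ)).mp h1
          rw [div_lt_iff₀ hw, mul_comm]
          exact h4
        have h5 : (l / w) ^ (1 / κ) < ((t * C₁) ^ κ) ^ (1 / κ) :=
          Real.rpow_lt_rpow (by positivity) h3 (by positivity)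
        rw [hxdef]
        rwa [← Real.rpow_mul (by positivity), mul_one_div_cancel hκ.ne',
          Real.rpow_one] at h5
      have hFx : m (Set.Iic x) = 0 := by
        have hlim : Tendsto (fun u : ℝ => ENNReal.ofReal (Real.exp (u * (x - t * C₁))))
            atTop (nhds 0) := by
          have h2 : Tendsto (fun u : ℝ => u * (x - t * C₁)) atTop atBot :=
            Filter.Tendsto.atTop_mul_const_of_neg (by linarith) tendsto_id
          have h3 := Real.tendsto_exp_atBot.comp h2
          simpa [Function.comp_def] using (ENNReal.continuous_ofReal.tendsto 0).comp h3
        have hev : ∀ᶠ u in (atTop : Filter ℝ), m (Set.Iic x) ≤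
            ENNReal.ofReal (Real.exp (u * (x - t * C₁))) := by
          filter_upwards [eventually_ge_atTop (max c₂ 1)] with u hu
          have hu0 : (0:ℝ) < u := lt_of_lt_of_le one_pos (le_trans (le_max_right _ _) hu)
          have h8 := SB u (le_trans (le_max_left _ _) hu) hu0 x
          have heq : u * x - t * (C₁ * u ^ ρ) = u * (x - t * C₁) := by
            rw [hρeq, Real.rpow_one]
            ring
          rw [heq] at h8
          exact h8
        exact le_zero_iff.mp (ge_of_tendsto hlim hev)
      have h9 : m {s : ℝ | y < f s} = 0 := le_zero_iff.mp ((hsub y hy1).trans_eq hFx)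
      rw [h9]
      exact zero_le
  obtain ⟨S, hSle, hS⟩ := key1
  rw [hI, hlc]
  have hsplit : Set.Ioc (0:ℝ) E ∪ Set.Ioi E = Set.Ioi 0 := Set.Ioc_union_Ioi_eq_Ioi hE0.le
  rw [← hsplit, lintegral_union measurableSet_Ioi (Set.Ioc_disjoint_Ioi le_rfl)]
  have piece1 : ∫⁻ y in Set.Ioc (0:ℝ) E, m {s : ℝ | y < f s} ≤ ENNReal.ofReal E := by
    calc ∫⁻ y in Set.Ioc (0:ℝ) E, m {s : ℝ | y < f s} ≤ ∫⁻ _ in Set.Ioc (0:ℝ) E, 1 :=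
          lintegral_mono fun y => prob_le_one
      _ = volume (Set.Ioc (0:ℝ) E) := setLIntegral_one _
      _ = ENNReal.ofReal E := by rw [Real.volume_Ioc, sub_zero]
  have piece2 : ∫⁻ y in Set.Ioi E, m {s : ℝ | y < f s} ≤ ENNReal.ofReal (Real.exp S * M) := by
    have hmono : ∫⁻ y in Set.Ioi E, m {s : ℝ | y < f s} ≤
        ∫⁻ y in Set.Ioi E, ENNReal.ofReal (Real.exp S * y ^ (-n)) := by
      refine setLIntegral_mono ?_ ?_
      · exact (measurable_const.mul (measurable_id.pow measurable_const)).ennreal_ofReal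
      · intro y hy; exact hS y hy
    have hint : IntegrableOn (fun y : ℝ => Real.exp S * y ^ (-n)) (Set.Ioi E) :=
      (integrableOn_Ioi_rpow_of_lt (by linarith) hE0).const_mul _
    have heq : ENNReal.ofReal (∫ y in Set.Ioi E, Real.exp S * y ^ (-n)) =
        ∫⁻ y in Set.Ioi E, ENNReal.ofReal (Real.exp S * y ^ (-n)) := by
      refine ofReal_integral_eq_lintegral_ofReal hint ?_
      filter_upwards [self_mem_ae_restrict (measurableSet_Ioi : MeasurableSet (Set.Ioi E))]
        with y hy
      exact mul_nonneg (Real.exp_pos _).le (Real.rpow_nonneg (le_of_lt (hE0.trans hy)) _)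
    have hval : ∫ y in Set.Ioi E, Real.exp S * y ^ (-n) ≤ Real.exp S * M := by
      rw [integral_const_mul, integral_Ioi_rpow_of_lt (by linarith) hE0]
      refine mul_le_mul_of_nonneg_left ?_ (Real.exp_pos _).le
      have h1 : -E ^ (-n + 1) / (-n + 1) = E ^ (-n + 1) / (n - 1) := by
        rw [show (-n + 1) = -(n-1) by ring, div_neg, neg_div, neg_neg]
      rw [h1]
      have h2 : E ^ (-n + 1) ≤ 1 :=
        Real.rpow_le_one_of_one_le_of_nonpos hE1.le (by linarith)
      calc E ^ (-n + 1) / (n - 1) ≤ 1 / (n - 1) :=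
            (div_le_div_iff_of_pos_right (by linarith : (0:ℝ) < n - 1)).mpr h2
        _ = M := hninv
    exact hmono.trans (heq ▸ ENNReal.ofReal_le_ofReal hval)
  have hfinal : E + Real.exp S * M ≤ Real.exp (K * (B + X) + wc) := by
    set A₁ : ℝ := X + wc + C₁ ^ (-κ) * X with hA₁def
    have hA₁0 : 0 ≤ A₁ := by positivity
    have e1 : E ≤ Real.exp A₁ := Real.exp_le_exp.mpr hWcle
    have e2 : Real.exp S * M ≤ (Real.exp K₁ * Real.exp (K₁ * B)) * X := by
      rw [← Real.exp_add]
      refine mul_le_mul ?_ (min_le_left _ _) hM0.le (Real.exp_pos _).le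
      exact Real.exp_le_exp.mpr (by nlinarith)
    have e3 : Real.exp A₁ ≤ Real.exp (A₁ + K₁ * B) := Real.exp_le_exp.mpr (by nlinarith)
    have e4 : Real.exp K₁ * Real.exp (K₁ * B) * X ≤ Real.exp (A₁ + K₁ * B) * (Real.exp K₁ * X) := by
      rw [Real.exp_add]
      have : Real.exp (K₁ * B) ≤ Real.exp A₁ * Real.exp (K₁ * B) := by
        nlinarith [Real.exp_pos (K₁ * B), Real.one_le_exp hA₁0]
      have h := mul_le_mul_of_nonneg_right this (mul_pos (Real.exp_pos K₁) hX).le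
      nlinarith [h]
    have e5 : Real.exp (A₁ + K₁ * B) * (1 + Real.exp K₁ * X) ≤
        Real.exp (A₁ + K₁ * B) * Real.exp (Real.exp K₁ * X) := by
      refine mul_le_mul_of_nonneg_left ?_ (Real.exp_pos _).le
      linarith [Real.add_one_le_exp (Real.exp K₁ * X)]
    have e6 : A₁ + K₁ * B + Real.exp K₁ * X ≤ K * (B + X) + wc := by
      rw [hA₁def, hKdef]
      nlinarith [hB.le, hX.le, hK₁.le, Real.exp_pos K₁, Real.rpow_nonneg hC₁.le (-κ)]
    have e7 : E + Real.exp S * M ≤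
        Real.exp (A₁ + K₁ * B) + Real.exp (A₁ + K₁ * B) * (Real.exp K₁ * X) := by linarith
    calc E + Real.exp S * M ≤ Real.exp (A₁ + K₁ * B) * (1 + Real.exp K₁ * X) := by
          rw [mul_add, mul_one]; linarith
      _ ≤ Real.exp (A₁ + K₁ * B) * Real.exp (Real.exp K₁ * X) := e5
      _ = Real.exp (A₁ + K₁ * B + Real.exp K₁ * X) := by rw [← Real.exp_add]
      _ ≤ Real.exp (K * (B + X) + wc) := Real.exp_le_exp.mpr e6
  calc (∫⁻ y in Set.Ioc (0:ℝ) E, m {s : ℝ | y < f s}) + ∫⁻ y in Set.Ioi E, m {s : ℝ | y < f s}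
      ≤ ENNReal.ofReal E + ENNReal.ofReal (Real.exp S * M) := add_le_add piece1 piece2
    _ = ENNReal.ofReal (E + Real.exp S * M) := by
        rw [← ENNReal.ofReal_add hE0.le (mul_nonneg (Real.exp_pos _).le hM0.le)]
    _ ≤ ENNReal.ofReal (Real.exp (K * (B + X) + wc)) := ENNReal.ofReal_le_ofReal hfinal


lemma sb_aux (m : Measure ℝ) [IsProbabilityMeasure m] (hsupp : m (Set.Iio 0) = 0)
    (a u x : ℝ) (hu : 0 < u)
    (hL : ∫ s, Real.exp (-u * s) ∂m = Real.exp a) :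
    m (Set.Iic x) ≤ ENNReal.ofReal (Real.exp (u * x + a)) := by
  have h0 : ∀ᵐ s ∂m, 0 ≤ s := by
    rw [ae_iff]
    simpa [Set.Iio] using hsupp
  rcases lt_or_ge x 0 with hx | hx
  · have : m (Set.Iic x) ≤ m (Set.Iio 0) := measure_mono (fun s hs => lt_of_le_of_lt hs hx)
    simp only [hsupp, le_zero_iff] at this
    simp [this]
  · have hInt : Integrable (fun s => Real.exp (-u * s)) m := by
      refine Integrable.mono' (integrable_const 1)
        ((Real.continuous_exp.comp (continuous_const.mul continuous_id)).aestronglyMeasurable) ?_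
      filter_upwards [h0] with s hs
      rw [Real.norm_eq_abs, abs_of_pos (Real.exp_pos _)]
      exact Real.exp_le_one_iff.mpr (by nlinarith)
    have h1 : Real.exp (-u * x) * (m (Set.Icc 0 x)).toReal ≤
        ∫ s in Set.Icc 0 x, Real.exp (-u * s) ∂m := by
      refine le_trans (le_of_eq ?_) (setIntegral_ge_of_const_le (c := Real.exp (-u * x)) measurableSet_Icc (measure_ne_top m _) ?_
        hInt.integrableOn)
      · rw [smul_eq_mul, mul_comm]; rfl
      intro s hs
      exact Real.exp_le_exp.mpr (by nlinarith [hs.2])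
    have h2 : ∫ s in Set.Icc 0 x, Real.exp (-u * s) ∂m ≤ ∫ s, Real.exp (-u * s) ∂m :=
      setIntegral_le_integral hInt (Eventually.of_forall fun s => (Real.exp_pos _).le)
    have h3 : (m (Set.Icc 0 x)).toReal ≤ Real.exp (u * x + a) := by
      have := (h1.trans h2).trans_eq hL
      have hpos := Real.exp_pos (-u * x)
      rw [show u * x + a = -(-u * x) + a by ring, Real.exp_add, Real.exp_neg]
      rw [inv_mul_eq_div, le_div_iff₀' hpos]
      exact this
    have hIic : m (Set.Iic x) ≤ m (Set.Icc 0 x) := by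
      calc m (Set.Iic x) ≤ m (Set.Iio 0 ∪ Set.Icc 0 x) := by
            refine measure_mono fun s hs => ?_
            rcases lt_or_ge s 0 with h | h
            · exact Or.inl h
            · exact Or.inr ⟨h, hs⟩
        _ ≤ m (Set.Iio 0) + m (Set.Icc 0 x) := measure_union_le _ _
        _ = m (Set.Icc 0 x) := by rw [hsupp, zero_add]
    calc m (Set.Iic x) ≤ m (Set.Icc 0 x) := hIic
      _ = ENNReal.ofReal (m (Set.Icc 0 x)).toReal := (ENNReal.ofReal_toReal (measure_ne_top m _)).symm
      _ ≤ ENNReal.ofReal (Real.exp (u * x + a)) := ENNReal.ofReal_le_ofReal h3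




set_option maxHeartbeats 1000000 in
/-- exponential negative moment estimates for a subordinator.
The integrand is `∞` for `s ≤ 0`, matching `e^{λ·0^{-κ}} = ∞`. -/
theorem subordinator_exponential_negative_moment_estimate
    (b : ℝ) (hb : 0 ≤ b)
    (ν : Measure ℝ) (hνsupp : ν (Set.Iic 0) = 0)
    (hνint : ∫⁻ x, ENNReal.ofReal (min x 1) ∂ν < ⊤)
    (φ : ℝ → ℝ)
    (hφ : ∀ u > 0, φ u = b * u + ∫ x, (1 - Real.exp (-u * x)) ∂ν)
    (μ : ℝ → Measure ℝ)
    (hμprob : ∀ t > 0, IsProbabilityMeasure (μ t))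
    (hμsupp : ∀ t > 0, μ t (Set.Iio 0) = 0)
    (hlaplace : ∀ t > 0, ∀ u > 0, ∫ s, Real.exp (-u * s) ∂(μ t) = Real.exp (-t * φ u))
    (κ ρ C₁ C₂ : ℝ) (hκ : 0 < κ) (hρl : κ / (1 + κ) < ρ) (hρ1 : ρ ≤ 1)
    (hC₁ : 0 < C₁) (hC₂ : 0 ≤ C₂)
    (hlow : ∀ u ≥ C₂, C₁ * u ^ ρ ≤ φ u) :
    (∃ C > 0, ∀ l > 0, ∀ t > 0,
      ∫⁻ s, (if s ≤ 0 then (⊤ : ℝ≥0∞)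
          else ENNReal.ofReal (Real.exp (l * s ^ (-κ)))) ∂(μ t) ≤
        ENNReal.ofReal (Real.exp (C * (l
          + (l / t ^ (κ / ρ)) ^ (ρ / (ρ - (1 - ρ) * κ))
          + l / t ^ (κ / ρ)))))
    ∧ (∀ l > 0, ∃ C > 0, ∀ t > 0,
      ∫⁻ s, (if s ≤ 0 then (⊤ : ℝ≥0∞)
          else ENNReal.ofReal (Real.exp (l * s ^ (-κ)))) ∂(μ t) ≤
        ENNReal.ofReal (Real.exp (C * (min t 1) ^ (-(κ / (ρ - (1 - ρ) * κ))))))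
    ∧ ((∀ u > 0, C₁ * u ^ ρ ≤ φ u) →
      ∃ C > 0, ∀ l > 0, ∀ t > 0,
        ∫⁻ s, (if s ≤ 0 then (⊤ : ℝ≥0∞)
            else ENNReal.ofReal (Real.exp (l * s ^ (-κ)))) ∂(μ t) ≤
          ENNReal.ofReal (Real.exp (C * ((l / t ^ (κ / ρ)) ^ (ρ / (ρ - (1 - ρ) * κ))
            + l / t ^ (κ / ρ))))) := by
  have hρ0 : 0 < ρ := lt_trans (by positivity) hρl
  have h1κ : (0:ℝ) < 1 + κ := by linarith
  have hδ : 0 < ρ - (1 - ρ) * κ := by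
    have := (div_lt_iff₀ h1κ).mp hρl
    nlinarith
  set δ : ℝ := ρ - (1 - ρ) * κ with hδdef
  have hδρ : δ ≤ ρ := by rw [hδdef]; nlinarith
  -- The general small-ball bound
  have SB : ∀ c₂ : ℝ, (∀ u, c₂ ≤ u → 0 < u → C₁ * u ^ ρ ≤ φ u) → ∀ t, 0 < t →
      ∀ u, c₂ ≤ u → 0 < u → ∀ x : ℝ,
      μ t (Set.Iic x) ≤ ENNReal.ofReal (Real.exp (u * x - t * (C₁ * u ^ ρ))) := by
    intro c₂ hlow' t ht u hc hu x
    haveI := hμprob t ht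
    have h := sb_aux (μ t) (hμsupp t ht) (-t * φ u) u x hu (hlaplace t ht u hu)
    refine h.trans (ENNReal.ofReal_le_ofReal (Real.exp_le_exp.mpr ?_))
    have h2 := mul_le_mul_of_nonneg_left (hlow' u hc hu) ht.le
    linarith
  obtain ⟨K, hK0, hcore⟩ := core_aux κ ρ C₁ C₂ hκ hρl hρ1 hC₁ hC₂
  set a : ℝ := (2 * C₂ ^ (1 - ρ)) ^ κ / C₁ ^ κ with hadef
  have ha : 0 ≤ a := by positivity
  -- the common estimate for parts 1 and 2
  have part1 : ∀ l : ℝ, 0 < l → ∀ t : ℝ, 0 < t →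
      ∫⁻ s, (if s ≤ 0 then (⊤ : ℝ≥0∞)
          else ENNReal.ofReal (Real.exp (l * s ^ (-κ)))) ∂(μ t) ≤
      ENNReal.ofReal (Real.exp ((K + a) * (l
          + (l / t ^ (κ / ρ)) ^ (ρ / δ) + l / t ^ (κ / ρ)))) := by
    intro l hl t ht
    have hmain := hcore t ht l hl (μ t) (hμprob t ht)
      (SB C₂ (fun u hc _ => hlow u hc) t ht)
    refine hmain.trans (ENNReal.ofReal_le_ofReal (Real.exp_le_exp.mpr ?_))
    set X : ℝ := l / t ^ (κ / ρ) with hXdef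
    have hX : 0 < X := by positivity
    have hB : 0 < X ^ (ρ / δ) := Real.rpow_pos_of_pos hX _
    have hwc : l * (2 * C₂ ^ (1 - ρ)) ^ κ / (t * C₁) ^ κ ≤ a * (l + X) := by
      have hsplit : (t * C₁) ^ κ = t ^ κ * C₁ ^ κ := Real.mul_rpow ht.le hC₁.le
      have h1 : l * (2 * C₂ ^ (1 - ρ)) ^ κ / (t * C₁) ^ κ = a * (l / t ^ κ) := by
        rw [hsplit, hadef]
        have h2 : (0:ℝ) < t ^ κ := Real.rpow_pos_of_pos ht κ
        have h3 : (0:ℝ) < C₁ ^ κ := Real.rpow_pos_of_pos hC₁ κ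
        field_simp
      rw [h1]
      have h4 : l / t ^ κ ≤ l + X := by
        rcases le_total 1 t with h | h
        · have h5 : (1:ℝ) ≤ t ^ κ := Real.one_le_rpow h hκ.le
          have h6 : l / t ^ κ ≤ l := by
            rw [div_le_iff₀ (by positivity)]
            nlinarith
          linarith [hX.le]
        · have h5 : t ^ (κ / ρ) ≤ t ^ κ :=
            Real.rpow_le_rpow_of_exponent_ge ht h (by
              rw [le_div_iff₀ hρ0]; nlinarith)
          have h6 : l / t ^ κ ≤ X := by
            rw [hXdef]
            exact div_le_div_of_nonneg_left hl.le (by positivity) h5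
          linarith [hl.le]
      exact mul_le_mul_of_nonneg_left h4 ha
    nlinarith [hB.le, hX.le, hl.le, mul_le_mul_of_nonneg_left (le_refl (0:ℝ)) ha]
  refine ⟨⟨K + a, by positivity, fun l hl t ht => part1 l hl t ht⟩, ?_, ?_⟩
  · -- part 2
    intro l hl
    refine ⟨(K + a) * (2 * l + l ^ (ρ / δ)), by positivity, fun t ht => ?_⟩
    refine (part1 l hl t ht).trans (ENNReal.ofReal_le_ofReal (Real.exp_le_exp.mpr ?_))
    set X : ℝ := l / t ^ (κ / ρ) with hXdef
    have hX : 0 < X := by positivity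
    have hmono : l + X ^ (ρ / δ) + X ≤ (2 * l + l ^ (ρ / δ)) * (min t 1) ^ (-(κ / δ)) := by
      rcases le_total 1 t with h | h
      · rw [min_eq_right h, Real.one_rpow]
        have h1 : X ≤ l := by
          rw [hXdef, div_le_iff₀ (by positivity)]
          nlinarith [Real.one_le_rpow h (by positivity : (0:ℝ) ≤ κ / ρ), hl]
        have h2 : X ^ (ρ / δ) ≤ l ^ (ρ / δ) := Real.rpow_le_rpow hX.le h1 (by positivity)
        nlinarith
      · rw [min_eq_left h]
        have htp : (1:ℝ) ≤ t ^ (-(κ / δ)) := by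
          rw [show (1:ℝ) = t ^ (0:ℝ) by rw [Real.rpow_zero]]
          exact Real.rpow_le_rpow_of_exponent_ge ht h (neg_nonpos.mpr (by positivity))
        have hXl : X ≤ l * t ^ (-(κ / δ)) := by
          rw [hXdef, div_eq_mul_inv, ← Real.rpow_neg ht.le]
          refine mul_le_mul_of_nonneg_left ?_ hl.le
          exact Real.rpow_le_rpow_of_exponent_ge ht h (by
            rw [neg_le_neg_iff]
            exact div_le_div_of_nonneg_left hκ.le hδ hδρ)
        have hBval : X ^ (ρ / δ) ≤ l ^ (ρ / δ) * t ^ (-(κ / δ)) := by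
          have h1 : X = l * t ^ (-(κ / ρ)) := by
            rw [hXdef, div_eq_mul_inv, ← Real.rpow_neg ht.le]
          rw [h1, Real.mul_rpow hl.le (Real.rpow_nonneg ht.le _),
            ← Real.rpow_mul ht.le]
          refine mul_le_mul_of_nonneg_left ?_ (Real.rpow_nonneg hl.le _)
          refine le_of_eq ?_
          congr 1
          field_simp
        have hll : l ≤ l * t ^ (-(κ / δ)) := by nlinarith
        nlinarith [Real.rpow_nonneg hl.le (ρ / δ), hl.le]
    calc (K + a) * (l + X ^ (ρ / δ) + X)
        ≤ (K + a) * ((2 * l + l ^ (ρ / δ)) * (min t 1) ^ (-(κ / δ))) :=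
          mul_le_mul_of_nonneg_left hmono (by positivity)
      _ = (K + a) * (2 * l + l ^ (ρ / δ)) * (min t 1) ^ (-(κ / δ)) := by ring
  · -- part 3
    intro hlow3
    obtain ⟨K3, hK30, hcore3⟩ := core_aux κ ρ C₁ 0 hκ hρl hρ1 hC₁ le_rfl
    refine ⟨K3 + (2 / C₁) ^ κ, by positivity, fun l hl t ht => ?_⟩
    have hmain := hcore3 t ht l hl (μ t) (hμprob t ht)
      (SB 0 (fun u _ hu => hlow3 u hu) t ht)
    refine hmain.trans (ENNReal.ofReal_le_ofReal (Real.exp_le_exp.mpr ?_))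
    set X : ℝ := l / t ^ (κ / ρ) with hXdef
    have hX : 0 < X := by positivity
    have hB : 0 < X ^ (ρ / δ) := Real.rpow_pos_of_pos hX _
    clear_value X
    have hwc3 : l * (2 * (0:ℝ) ^ (1 - ρ)) ^ κ / (t * C₁) ^ κ ≤ (2 / C₁) ^ κ * X := by
      rcases lt_or_eq_of_le hρ1 with hρlt | hρeq
      · rw [Real.zero_rpow (by linarith : 1 - ρ ≠ 0), mul_zero,
          Real.zero_rpow hκ.ne', mul_zero, zero_div]
        positivity
      · rw [hXdef, hρeq, sub_self, Real.rpow_zero, mul_one, div_one,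
          Real.mul_rpow ht.le hC₁.le, Real.div_rpow (by norm_num) hC₁.le]
        have h2 : (0:ℝ) < t ^ κ := Real.rpow_pos_of_pos ht κ
        have h3 : (0:ℝ) < C₁ ^ κ := Real.rpow_pos_of_pos hC₁ κ
        refine le_of_eq ?_
        field_simp
    have hc0 : (0:ℝ) ≤ (2 / C₁) ^ κ := by positivity
    have h9 : (2 / C₁) ^ κ * X ≤ (2 / C₁) ^ κ * (X ^ (ρ / δ) + X) :=
      mul_le_mul_of_nonneg_left (by linarith : X ≤ X ^ (ρ / δ) + X) hc0
    nlinarith [hwc3, h9]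
end

section
/- Let κ > 0 and suppose there exist σ ∈ (0, κ/(1+κ)) and constants C₃ > 0, C₄ > 0 such that φ(u) ≤ C₃ u^σ for all u ≥ C₄. Then for every λ > 0 and every t > 0, the exponential negative moment is infinite: E e^{λ S_t^{-κ}} = ∫ e^{λ s^{-κ}} μ_t(ds) = ∞. -/
open MeasureTheory Filter Set
open scoped ENNReal Classical

private lemma tendsto_aux_sub (d c p q : ℝ) (hd : 0 < d) (hq : 0 < q) (hpq : q < p) :
    Tendsto (fun u : ℝ => d * u ^ p - c * u ^ q) atTop atTop := by
  have h1 : Tendsto (fun u : ℝ => u ^ q * (d * u ^ (p - q) - c)) atTop atTop := by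
    apply Filter.Tendsto.atTop_mul_atTop₀ (tendsto_rpow_atTop hq)
    apply tendsto_atTop_add_const_right
    exact Filter.Tendsto.const_mul_atTop hd (tendsto_rpow_atTop (by linarith))
  apply h1.congr'
  filter_upwards [eventually_gt_atTop 0] with u hu
  have : u ^ q * u ^ (p - q) = u ^ p := by
    rw [← Real.rpow_add hu]; ring_nf
  calc u ^ q * (d * u ^ (p - q) - c)
      = d * (u ^ q * u ^ (p - q)) - c * u ^ q := by ring
    _ = d * u ^ p - c * u ^ q := by rw [this]

set_option maxHeartbeats 1000000 in
/-- if φ(u) ≤ C₃ u^σ for large u with σ < κ/(1+κ), then the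
exponential negative moment of order κ is infinite. -/
theorem subordinator_exponential_negative_moment_infinite
    (b : ℝ) (hb : 0 ≤ b)
    (ν : Measure ℝ) (hνsupp : ν (Set.Iic 0) = 0)
    (hνint : ∫⁻ x, ENNReal.ofReal (min x 1) ∂ν < ⊤)
    (φ : ℝ → ℝ)
    (hφ : ∀ u > 0, φ u = b * u + ∫ x, (1 - Real.exp (-u * x)) ∂ν)
    (μ : ℝ → Measure ℝ)
    (hμprob : ∀ t > 0, IsProbabilityMeasure (μ t))
    (hμsupp : ∀ t > 0, μ t (Set.Iio 0) = 0)
    (hlaplace : ∀ t > 0, ∀ u > 0, ∫ s, Real.exp (-u * s) ∂(μ t) = Real.exp (-t * φ u))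
    (κ σ C₃ C₄ : ℝ) (hκ : 0 < κ) (hσ0 : 0 < σ) (hσκ : σ < κ / (1 + κ))
    (hC₃ : 0 < C₃) (hC₄ : 0 < C₄)
    (hup : ∀ u ≥ C₄, φ u ≤ C₃ * u ^ σ) :
    ∀ l : ℝ, 0 < l → ∀ t : ℝ, 0 < t →
      ∫⁻ s, (if s ≤ 0 then (⊤ : ℝ≥0∞)
          else ENNReal.ofReal (Real.exp (l * s ^ (-κ)))) ∂(μ t) = ⊤ := by
  intro l hl t ht
  have hprob := hμprob t ht
  by_cases h0 : μ t (Set.Iic 0) = 0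
  · -- main case : no mass on (-∞, 0]
    -- exponent arithmetic
    have hκσ : σ * (1 + κ) < κ := (lt_div_iff₀ (by positivity)).mp hσκ
    have hσ1 : σ < 1 := by nlinarith
    have hdiv : σ / κ < 1 - σ := (div_lt_iff₀ hκ).mpr (by nlinarith)
    set β : ℝ := (σ / κ + (1 - σ)) / 2 with hβdef
    have hβ1 : σ / κ < β := by rw [hβdef]; linarith
    have hβ2 : β < 1 - σ := by rw [hβdef]; linarith
    have hβpos : 0 < β := lt_of_le_of_lt (by positivity) hβ1
    have hβκσ : σ < β * κ := by
      have := (div_lt_iff₀ hκ).mp hβ1; linarith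
    have h1βσ : σ < 1 - β := by linarith
    -- conclude via arbitrary lower bounds
    apply ENNReal.eq_top_of_forall_nnreal_le
    intro r
    set M : ℝ := max (r : ℝ) 1 with hMdef
    have hM1 : (1 : ℝ) ≤ M := le_max_right _ _
    have hM0 : (0 : ℝ) < 2 * M := by linarith
    -- choose u large
    have hev1 := (tendsto_aux_sub 1 (t * C₃) (1 - β) σ one_pos hσ0 h1βσ).eventually_ge_atTop
      (Real.log 2)
    have hev2 := (tendsto_aux_sub l (t * C₃) (β * κ) σ hl hσ0 hβκσ).eventually_ge_atTop
      (Real.log (2 * M))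
    obtain ⟨u, ⟨hu1, hu2⟩, huC₄, hu0⟩ :=
      ((hev1.and hev2).and ((eventually_ge_atTop C₄).and (eventually_gt_atTop 0))).exists
    simp only [one_mul] at hu1
    set a : ℝ := u ^ (-β) with hadef
    have ha0 : 0 < a := Real.rpow_pos_of_pos hu0 _
    have hua : u * a = u ^ (1 - β) := by
      rw [hadef, show (1 : ℝ) - β = 1 + -β by ring, Real.rpow_add hu0, Real.rpow_one]
    have haκ : a ^ (-κ) = u ^ (β * κ) := by
      rw [hadef, ← Real.rpow_mul hu0.le, neg_mul_neg]
    -- a.e. nonneg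
    have hae0 : ∀ᵐ s ∂ μ t, 0 ≤ s := by
      rw [ae_iff]
      have : {s : ℝ | ¬ 0 ≤ s} = Set.Iio 0 := by ext s; simp [not_le]
      rw [this]; exact hμsupp t ht
    -- Markov step
    have hint : Integrable (fun s => Real.exp (-u * s)) (μ t) := by
      apply Integrable.mono' (integrable_const (1 : ℝ))
      · exact (Real.continuous_exp.comp (continuous_const.mul continuous_id)).aestronglyMeasurable
      · filter_upwards [hae0] with s hs
        rw [Real.norm_eq_abs, abs_of_pos (Real.exp_pos _)]
        exact Real.exp_le_one_iff.mpr (by nlinarith)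
    have hintg : Integrable
        (fun s => Set.indicator (Set.Iic a) (fun _ => (1 : ℝ)) s + Real.exp (-u * a)) (μ t) :=
      ((integrable_const (1 : ℝ)).indicator measurableSet_Iic).add (integrable_const _)
    have key : Real.exp (-t * φ u) ≤ (μ t (Set.Iic a)).toReal + Real.exp (-u * a) := by
      rw [← hlaplace t ht u hu0]
      have hmono : ∫ s, Real.exp (-u * s) ∂ μ t
          ≤ ∫ s, (Set.indicator (Set.Iic a) (fun _ => (1 : ℝ)) s + Real.exp (-u * a)) ∂ μ t := by
        apply integral_mono_ae hint hintg
        filter_upwards [hae0] with s hs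
        by_cases hsa : s ≤ a
        · rw [Set.indicator_of_mem (Set.mem_Iic.mpr hsa)]
          have h1 : Real.exp (-u * s) ≤ 1 := Real.exp_le_one_iff.mpr (by nlinarith)
          have h2 := Real.exp_pos (-u * a)
          linarith
        · rw [Set.indicator_of_notMem (by simpa using hsa), zero_add]
          exact Real.exp_le_exp.mpr (by nlinarith [not_le.mp hsa])
      rw [integral_add ((integrable_const (1 : ℝ)).indicator measurableSet_Iic)
        (integrable_const _), integral_indicator_const (1 : ℝ) measurableSet_Iic,
        integral_const] at hmono
      simpa [Measure.real] using hmono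
    -- measure of (0, a]
    have hIic : μ t (Set.Iic a) = μ t (Set.Ioc 0 a) := by
      apply le_antisymm
      · calc μ t (Set.Iic a) = μ t (Set.Iic 0 ∪ Set.Ioc 0 a) := by
              rw [Set.Iic_union_Ioc_eq_Iic ha0.le]
          _ ≤ μ t (Set.Iic 0) + μ t (Set.Ioc 0 a) := measure_union_le _ _
          _ = μ t (Set.Ioc 0 a) := by rw [h0, zero_add]
      · exact measure_mono Set.Ioc_subset_Iic_self
    -- lower bound on the measure
    have hexp1 : Real.exp (-(t * C₃ * u ^ σ)) ≤ Real.exp (-t * φ u) := by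
      apply Real.exp_le_exp.mpr
      have h := mul_le_mul_of_nonneg_left (hup u huC₄) ht.le
      linarith
    have hexp2 : Real.exp (-u * a) ≤ Real.exp (-(t * C₃ * u ^ σ)) / 2 := by
      rw [show -u * a = -(u * a) by ring, hua,
        show Real.exp (-(t * C₃ * u ^ σ)) / 2
          = Real.exp (-(t * C₃ * u ^ σ) - Real.log 2) by
            rw [Real.exp_sub, Real.exp_log two_pos]]
      exact Real.exp_le_exp.mpr (by linarith)
    have hmeas : ENNReal.ofReal (Real.exp (-(t * C₃ * u ^ σ)) / 2) ≤ μ t (Set.Ioc 0 a) := by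
      rw [← hIic]
      apply ENNReal.ofReal_le_of_le_toReal
      linarith
    -- lower bound on the integral
    calc (r : ℝ≥0∞) = ENNReal.ofReal (r : ℝ) := ENNReal.ofReal_coe_nnreal.symm
      _ ≤ ENNReal.ofReal (Real.exp (l * a ^ (-κ)) * (Real.exp (-(t * C₃ * u ^ σ)) / 2)) := by
          apply ENNReal.ofReal_le_ofReal
          rw [haκ]
          have h5 : Real.exp (l * u ^ (β * κ)) * (Real.exp (-(t * C₃ * u ^ σ)) / 2)
              = Real.exp (l * u ^ (β * κ) + -(t * C₃ * u ^ σ)) / 2 := by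
            rw [Real.exp_add]; ring
          have h7 : 2 * M ≤ Real.exp (l * u ^ (β * κ) + -(t * C₃ * u ^ σ)) := by
            calc 2 * M = Real.exp (Real.log (2 * M)) := (Real.exp_log hM0).symm
              _ ≤ _ := Real.exp_le_exp.mpr (by linarith [hu2])
          have h8 : (r : ℝ) ≤ M := le_max_left _ _
          rw [h5]; linarith
      _ ≤ ENNReal.ofReal (Real.exp (l * a ^ (-κ))) * ENNReal.ofReal
            (Real.exp (-(t * C₃ * u ^ σ)) / 2) := by
          rw [← ENNReal.ofReal_mul (Real.exp_pos _).le]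
      _ ≤ ENNReal.ofReal (Real.exp (l * a ^ (-κ))) * μ t (Set.Ioc 0 a) := by
          gcongr
      _ = ∫⁻ s in Set.Ioc 0 a, ENNReal.ofReal (Real.exp (l * a ^ (-κ))) ∂ μ t := by
          rw [setLIntegral_const]
      _ ≤ ∫⁻ s in Set.Ioc 0 a, (if s ≤ 0 then (⊤ : ℝ≥0∞)
            else ENNReal.ofReal (Real.exp (l * s ^ (-κ)))) ∂ μ t := by
          apply setLIntegral_mono' measurableSet_Ioc
          intro s hs
          rw [if_neg (not_le.mpr hs.1)]
          apply ENNReal.ofReal_le_ofReal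
          apply Real.exp_le_exp.mpr
          apply mul_le_mul_of_nonneg_left _ hl.le
          exact Real.rpow_le_rpow_of_nonpos hs.1 hs.2 (neg_nonpos.mpr hκ.le)
      _ ≤ _ := setLIntegral_le_lintegral _ _
  · -- mass at (-∞,0]: integrand is ⊤ there
    rw [eq_top_iff]
    calc (⊤ : ℝ≥0∞) = ∫⁻ _ in Set.Iic 0, (⊤ : ℝ≥0∞) ∂ μ t := by
          rw [setLIntegral_const, ENNReal.top_mul h0]
      _ = ∫⁻ s in Set.Iic 0, (if s ≤ 0 then (⊤ : ℝ≥0∞)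
            else ENNReal.ofReal (Real.exp (l * s ^ (-κ)))) ∂ μ t := by
          apply setLIntegral_congr_fun measurableSet_Iic
          intro s hs
          exact (if_pos (Set.mem_Iic.mp hs)).symm
      _ ≤ _ := setLIntegral_le_lintegral _ _
end

section
/- Suppose the Lévy measure ν is not the zero measure. Then there exists a unit vector x₀ ∈ ℝ^d such that, with the cone D := { z ∈ ℝ^d \ {0} : ⟨x₀, z⟩/|z| ≥ cos(π/8) }, one has liminf_{ξ ∈ D, |ξ| → 0} |ψ(ξ)|/|ξ|² > 0. Consequently, for every α > 2 it is not the case that lim_{|ξ|→0} |ψ(ξ)|/|ξ|^α = 0; i.e. the index β₀ := sup{ α ≥ 0 : lim_{|ξ|→0} |ψ(ξ)|/|ξ|^α = 0 } satisfies β₀ ≤ 2. -/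
open MeasureTheory Filter Set
open scoped ENNReal

private lemma cos_quad_bound (t : ℝ) (ht : |t| ≤ 1) : t ^ 2 / 4 ≤ 1 - Real.cos t := by
  have h := Real.cos_bound ht
  have h2 : |t| ^ 4 ≤ t ^ 2 := by
    have : t ^ 2 ≤ 1 := by nlinarith [abs_nonneg t, sq_abs t]
    nlinarith [sq_abs t, sq_nonneg t]
  have := abs_le.1 h
  nlinarith [sq_abs t]

private lemma re_integrand (s u : ℝ) :
    ((1 : ℂ) - Complex.exp (Complex.I * (u : ℂ)) + Complex.I * (s : ℂ)).re
      = 1 - Real.cos u := by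
  rw [mul_comm Complex.I]
  simp [Complex.exp_ofReal_mul_I_re, Complex.mul_re]

set_option maxHeartbeats 1000000 in
/-- the index β₀ of a Lévy symbol at the origin is at most 2:
on a suitable cone D, liminf_{ξ ∈ D, ξ → 0} |ψ(ξ)|/|ξ|² > 0, and hence
|ψ(ξ)|/|ξ|^α does not tend to 0 as ξ → 0 for any α > 2. -/
theorem levy_symbol_index_at_origin_le_two
    (d : ℕ) (hd : 1 ≤ d)
    (ℓ : EuclideanSpace ℝ (Fin d))
    (Q : EuclideanSpace ℝ (Fin d) →ₗ[ℝ] EuclideanSpace ℝ (Fin d))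
    (hQsymm : ∀ ξ η, (inner ℝ (Q ξ) η : ℝ) = (inner ℝ ξ (Q η) : ℝ))
    (hQpos : ∀ ξ, 0 ≤ (inner ℝ ξ (Q ξ) : ℝ))
    (ν : Measure (EuclideanSpace ℝ (Fin d)))
    (hν0 : ν {0} = 0)
    (hν : ∫⁻ y, ENNReal.ofReal (min 1 (‖y‖ ^ 2)) ∂ν < ⊤)
    (ψ : EuclideanSpace ℝ (Fin d) → ℂ)
    (hψ : ∀ ξ, ψ ξ = -Complex.I * ((inner ℝ ℓ ξ : ℝ) : ℂ)
        + (((1 / 2 : ℝ) * (inner ℝ ξ (Q ξ) : ℝ) : ℝ) : ℂ)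
        + ∫ y, ((1 : ℂ) - Complex.exp (Complex.I * ((inner ℝ ξ y : ℝ) : ℂ))
            + Complex.I * ((Set.indicator {y : EuclideanSpace ℝ (Fin d) | y ≠ 0 ∧ ‖y‖ < 1}
                (fun y => (inner ℝ ξ y : ℝ)) y : ℝ) : ℂ)) ∂ν)
    (hνne : ν ≠ 0) :
    ∃ x₀ : EuclideanSpace ℝ (Fin d), ‖x₀‖ = 1 ∧
      (∃ c > 0, ∃ δ > 0, ∀ ξ : EuclideanSpace ℝ (Fin d), ξ ≠ 0 →
        Real.cos (Real.pi / 8) ≤ (inner ℝ x₀ ξ : ℝ) / ‖ξ‖ → ‖ξ‖ < δ →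
          c ≤ ‖ψ ξ‖ / ‖ξ‖ ^ 2) ∧
      (∀ α : ℝ, 2 < α →
        ¬ Filter.Tendsto (fun ξ : EuclideanSpace ℝ (Fin d) => ‖ψ ξ‖ / ‖ξ‖ ^ α)
          (nhdsWithin 0 {(0 : EuclideanSpace ℝ (Fin d))}ᶜ) (nhds 0)) := by
  classical
  set co := Real.cos (Real.pi / 8) with hco_def
  have hpi : (0:ℝ) < Real.pi := Real.pi_pos
  have hco1 : co ≤ 1 := Real.cos_le_one _
  have hco_half : (1:ℝ)/2 ≤ co := by
    rw [← Real.cos_pi_div_three, hco_def]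
    exact Real.cos_le_cos_of_nonneg_of_le_pi (by positivity)
      (by linarith) (by linarith)
  -- Step 1: a positive-radius shell with positive measure
  have hcompl : ν ({(0:(EuclideanSpace ℝ (Fin d)))}ᶜ) ≠ 0 := by
    intro h0
    apply hνne
    have huniv : ν univ ≤ ν {(0:(EuclideanSpace ℝ (Fin d)))} + ν ({(0:(EuclideanSpace ℝ (Fin d)))}ᶜ) := by
      have := measure_union_le (μ := ν) {(0:(EuclideanSpace ℝ (Fin d)))} ({(0:(EuclideanSpace ℝ (Fin d)))}ᶜ)
      rwa [union_compl_self] at this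
    have : ν univ = 0 := le_antisymm (by simpa [hν0, h0] using huniv) (by simp)
    exact Measure.measure_univ_eq_zero.mp this
  obtain ⟨n, hn⟩ : ∃ n : ℕ, ν {y : (EuclideanSpace ℝ (Fin d)) | 1/(n+1:ℝ) < ‖y‖} ≠ 0 := by
    by_contra hall
    push_neg at hall
    apply hcompl
    have hsub : ({(0:(EuclideanSpace ℝ (Fin d)))}ᶜ) ⊆ ⋃ n : ℕ, {y : (EuclideanSpace ℝ (Fin d)) | 1/(n+1:ℝ) < ‖y‖} := by
      intro y hy
      have hy' : (0:ℝ) < ‖y‖ := by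
        simpa [norm_pos_iff] using hy
      obtain ⟨n, hn⟩ := exists_nat_one_div_lt hy'
      exact mem_iUnion.2 ⟨n, hn⟩
    refine le_antisymm ?_ (by simp)
    calc ν ({(0:(EuclideanSpace ℝ (Fin d)))}ᶜ) ≤ ν (⋃ n : ℕ, {y : (EuclideanSpace ℝ (Fin d)) | 1/(n+1:ℝ) < ‖y‖}) := measure_mono hsub
      _ = 0 := measure_iUnion_null (fun n => hall n)
  set r : ℝ := 1/(n+1:ℝ) with hr_def
  have hrpos : 0 < r := by positivity
  set S : Set (EuclideanSpace ℝ (Fin d)) := {y : (EuclideanSpace ℝ (Fin d)) | r < ‖y‖} with hS_def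
  have hSmeas : MeasurableSet S := by
    have : S = (fun y : (EuclideanSpace ℝ (Fin d)) => ‖y‖) ⁻¹' (Ioi r) := rfl
    rw [this]
    exact measurable_norm measurableSet_Ioi
  -- ν S < ∞
  have hSfin : ν S < ⊤ := by
    by_contra htop
    push_neg at htop
    have htop' : ν S = ⊤ := top_le_iff.mp htop
    have hle : ENNReal.ofReal (min 1 (r^2)) * ν S
        ≤ ∫⁻ y, ENNReal.ofReal (min 1 (‖y‖ ^ 2)) ∂ν := by
      rw [← setLIntegral_const S (ENNReal.ofReal (min 1 (r^2)))]
      refine le_trans (setLIntegral_mono' hSmeas ?_)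
        (setLIntegral_le_lintegral S _)
      intro y hy
      apply ENNReal.ofReal_le_ofReal
      have : r ^ 2 ≤ ‖y‖ ^ 2 := by
        have : r < ‖y‖ := hy
        nlinarith [hrpos]
      exact min_le_min le_rfl this
    rw [htop', ENNReal.mul_top (by simp [ENNReal.ofReal_eq_zero]; positivity)] at hle
    exact hν.ne (top_le_iff.mp hle)
  -- Step 2: covering argument, find a small ball with positive measure
  set ε : ℝ := r/8 with hε_def
  have hεpos : 0 < ε := by positivity
  obtain ⟨D, hDcount, hDdense⟩ := TopologicalSpace.exists_countable_dense (EuclideanSpace ℝ (Fin d))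
  have hcover : S ⊆ ⋃ x ∈ D, (Metric.ball x ε ∩ S) := by
    intro y hy
    obtain ⟨x, hxD, hx⟩ := hDdense.exists_dist_lt y hεpos
    exact mem_biUnion hxD ⟨by simpa [Metric.mem_ball, dist_comm] using hx, hy⟩
  obtain ⟨y₀, hy₀D, hy₀⟩ : ∃ x ∈ D, ν (Metric.ball x ε ∩ S) ≠ 0 := by
    by_contra hall
    push_neg at hall
    apply hn
    refine le_antisymm ?_ (by simp)
    calc ν S ≤ ν (⋃ x ∈ D, (Metric.ball x ε ∩ S)) := measure_mono hcover
      _ = 0 := (measure_biUnion_null_iff hDcount).2 hall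
  set B : Set (EuclideanSpace ℝ (Fin d)) := Metric.ball y₀ ε ∩ S with hB_def
  have hBmeas : MeasurableSet B := Metric.isOpen_ball.measurableSet.inter hSmeas
  have hBpos : 0 < ν B := pos_iff_ne_zero.mpr hy₀
  have hBfin : ν B < ⊤ := lt_of_le_of_lt (measure_mono inter_subset_right) hSfin
  obtain ⟨z, hz⟩ : B.Nonempty := nonempty_of_measure_ne_zero hy₀
  have hz1 : dist z y₀ < ε := Metric.mem_ball.mp hz.1
  have hz2 : r < ‖z‖ := hz.2
  have hy₀norm : r - ε < ‖y₀‖ := by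
    have h1 : ‖z‖ - ‖y₀‖ ≤ ‖z - y₀‖ := norm_sub_norm_le z y₀
    have h2 : ‖z - y₀‖ = dist z y₀ := (dist_eq_norm z y₀).symm
    linarith
  have hy₀ne : y₀ ≠ 0 := by
    intro h
    rw [h, norm_zero] at hy₀norm
    rw [hε_def] at hy₀norm
    linarith
  set x₀ : (EuclideanSpace ℝ (Fin d)) := ‖y₀‖⁻¹ • y₀ with hx₀_def
  have hy₀x₀ : y₀ = ‖y₀‖ • x₀ := by
    rw [hx₀_def, smul_smul, mul_inv_cancel₀ (norm_ne_zero_iff.mpr hy₀ne), one_smul]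
  have hx₀norm : ‖x₀‖ = 1 := norm_smul_inv_norm hy₀ne
  -- constants
  set c₁ : ℝ := co * ‖y₀‖ - ε with hc₁_def
  have hc₁pos : 0 < c₁ := by
    have h1 : (0:ℝ) ≤ r - ε := by rw [hε_def]; linarith
    have h2 : (1/2)*(r-ε) ≤ co*‖y₀‖ :=
      mul_le_mul hco_half hy₀norm.le h1 (le_trans one_half_pos.le hco_half)
    rw [hc₁_def]
    rw [hε_def] at h2 ⊢
    linarith
  set M : ℝ := ‖y₀‖ + ε with hM_def
  have hMpos : 0 < M := by positivity
  set δ : ℝ := min 1 M⁻¹ with hδ_def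
  have hδpos : 0 < δ := lt_min one_pos (by positivity)
  set c : ℝ := (c₁^2/4) * (ν B).toReal with hc_def
  have hcpos : 0 < c :=
    mul_pos (by positivity) (ENNReal.toReal_pos hBpos.ne' hBfin.ne)
  -- Step 3: key pointwise lower bound on the symbol
  have key : ∀ ξ : (EuclideanSpace ℝ (Fin d)), ξ ≠ 0 → co ≤ (inner ℝ x₀ ξ : ℝ) / ‖ξ‖ → ‖ξ‖ < δ →
      c ≤ ‖ψ ξ‖ / ‖ξ‖ ^ 2 := by
    intro ξ hξ0 hcone hξδ
    have hξpos : 0 < ‖ξ‖ := norm_pos_iff.mpr hξ0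
    have hξ1 : ‖ξ‖ ≤ 1 := le_of_lt (lt_of_lt_of_le hξδ (min_le_left _ _))
    have hξM : ‖ξ‖ * M < 1 := by
      have h1 : ‖ξ‖ < M⁻¹ := lt_of_lt_of_le hξδ (min_le_right _ _)
      calc ‖ξ‖ * M < M⁻¹ * M := mul_lt_mul_of_pos_right h1 hMpos
        _ = 1 := inv_mul_cancel₀ hMpos.ne'
    -- lower and upper bounds for inner ℝ products on B
    have hinner_lb : ∀ y ∈ B, c₁ * ‖ξ‖ ≤ (inner ℝ ξ y : ℝ) := by
      intro y hy
      have hyd : ‖y - y₀‖ < ε := by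
        have := Metric.mem_ball.mp hy.1
        rwa [dist_eq_norm] at this
      have h1 : (inner ℝ ξ y₀ : ℝ) = ‖y₀‖ * (inner ℝ x₀ ξ : ℝ) := by
        conv_lhs => rw [hy₀x₀]
        rw [real_inner_smul_right, real_inner_comm]
      have h2 : co * ‖ξ‖ ≤ (inner ℝ x₀ ξ : ℝ) := (le_div_iff₀ hξpos).mp hcone
      have h3 : |(inner ℝ ξ (y - y₀) : ℝ)| ≤ ‖ξ‖ * ‖y - y₀‖ := abs_real_inner_le_norm ξ (y - y₀)
      have h4 : (inner ℝ ξ (y - y₀) : ℝ) = (inner ℝ ξ y : ℝ) - (inner ℝ ξ y₀ : ℝ) := inner_sub_right ξ y y₀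
      have h5 := abs_le.1 h3
      have h6 : ‖ξ‖ * ‖y - y₀‖ ≤ ‖ξ‖ * ε := mul_le_mul_of_nonneg_left hyd.le hξpos.le
      have h7 : ‖y₀‖ * (co * ‖ξ‖) ≤ ‖y₀‖ * (inner ℝ x₀ ξ : ℝ) :=
        mul_le_mul_of_nonneg_left h2 (norm_nonneg _)
      rw [hc₁_def]
      linarith only [h1, h4, h5.1, h6, h7]
    have hinner_ub : ∀ y ∈ B, |(inner ℝ ξ y : ℝ)| < 1 := by
      intro y hy
      have hyd : ‖y - y₀‖ < ε := by
        have := Metric.mem_ball.mp hy.1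
        rwa [dist_eq_norm] at this
      have h1 : ‖y‖ < M := by
        have := norm_sub_norm_le y y₀
        rw [hM_def]; linarith
      calc |(inner ℝ ξ y : ℝ)| ≤ ‖ξ‖ * ‖y‖ := abs_real_inner_le_norm ξ y
        _ ≤ ‖ξ‖ * M := mul_le_mul_of_nonneg_left h1.le hξpos.le
        _ < 1 := hξM
    -- the integrand
    set A : Set (EuclideanSpace ℝ (Fin d)) := {y : (EuclideanSpace ℝ (Fin d)) | y ≠ 0 ∧ ‖y‖ < 1} with hA_def
    have hAmeas : MeasurableSet A := by
      have hAeq : A = ({(0:(EuclideanSpace ℝ (Fin d)))}ᶜ) ∩ {y : (EuclideanSpace ℝ (Fin d)) | ‖y‖ < 1} := by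
        ext y; simp [hA_def]
      rw [hAeq]
      exact (measurableSet_singleton (0:(EuclideanSpace ℝ (Fin d)))).compl.inter (measurable_norm measurableSet_Iio)
    have htmeas : Measurable (fun y : (EuclideanSpace ℝ (Fin d)) => (inner ℝ ξ y : ℝ)) :=
      (continuous_const.inner continuous_id).measurable
    set F : (EuclideanSpace ℝ (Fin d)) → ℂ := fun y => (1 : ℂ) - Complex.exp (Complex.I * ((inner ℝ ξ y : ℝ) : ℂ))
        + Complex.I * ((Set.indicator A (fun y => (inner ℝ ξ y : ℝ)) y : ℝ) : ℂ) with hF_def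
    have hFmeas : Measurable F := by
      apply Measurable.add
      · exact measurable_const.sub
          (Complex.measurable_exp.comp
            ((Complex.measurable_ofReal.comp htmeas).const_mul Complex.I))
      · exact (Complex.measurable_ofReal.comp (htmeas.indicator hAmeas)).const_mul Complex.I
    have hbound : ∀ y, ‖F y‖ ≤ 2 * min 1 (‖y‖^2) := by
      intro y
      by_cases hyA : y ∈ A
      · have hy1 : ‖y‖ < 1 := hyA.2
        have habs : |(inner ℝ ξ y : ℝ)| ≤ ‖ξ‖ * ‖y‖ := abs_real_inner_le_norm ξ y
        have habs1 : |(inner ℝ ξ y : ℝ)| ≤ 1 := by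
          calc |(inner ℝ ξ y : ℝ)| ≤ ‖ξ‖ * ‖y‖ := habs
            _ ≤ 1 * 1 := mul_le_mul hξ1 hy1.le (norm_nonneg _) zero_le_one
            _ = 1 := one_mul 1
        have hIabs : ‖Complex.I * ((inner ℝ ξ y : ℝ) : ℂ)‖ = |(inner ℝ ξ y : ℝ)| := by
          simp
        have heq : F y = -(Complex.exp (Complex.I * ((inner ℝ ξ y : ℝ) : ℂ)) - 1
            - Complex.I * ((inner ℝ ξ y : ℝ) : ℂ)) := by
          rw [hF_def]
          simp only [Set.indicator_of_mem hyA]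
          ring
        have hb := Complex.norm_exp_sub_one_sub_id_le (x := Complex.I * ((inner ℝ ξ y : ℝ) : ℂ))
          (by rw [hIabs]; exact habs1)
        rw [hIabs] at hb
        have hnorm : ‖F y‖ ≤ |(inner ℝ ξ y : ℝ)| ^ 2 := by
          rw [heq, norm_neg]
          exact hb
        have h1 : |(inner ℝ ξ y : ℝ)| ^ 2 ≤ ‖y‖ ^ 2 := by
          have := pow_le_pow_left₀ (abs_nonneg _) habs 2
          have h' : (‖ξ‖ * ‖y‖)^2 ≤ ‖y‖^2 := by
            nlinarith [mul_le_mul hξ1 hξ1 (norm_nonneg ξ) zero_le_one,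
              mul_nonneg (norm_nonneg y) (norm_nonneg y)]
          linarith
        have h2 : |(inner ℝ ξ y : ℝ)| ^ 2 ≤ 1 := by nlinarith [abs_nonneg (inner ℝ ξ y : ℝ)]
        have : |(inner ℝ ξ y : ℝ)| ^ 2 ≤ min 1 (‖y‖^2) := le_min h2 h1
        have hmin : (0:ℝ) ≤ min 1 (‖y‖^2) := le_min zero_le_one (sq_nonneg _)
        linarith
      · have heq : F y = (1:ℂ) - Complex.exp (Complex.I * ((inner ℝ ξ y : ℝ) : ℂ)) := by
          rw [hF_def]
          simp only [Set.indicator_of_notMem hyA, Complex.ofReal_zero, mul_zero, add_zero]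
        by_cases hy0 : y = 0
        · have : F y = 0 := by
            rw [heq, hy0]
            simp
          rw [this, hy0]
          simp
        · have hy1 : 1 ≤ ‖y‖ := by
            by_contra hlt
            push_neg at hlt
            exact hyA ⟨hy0, hlt⟩
          have hmin : min 1 (‖y‖^2) = 1 := min_eq_left (by nlinarith)
          rw [hmin, heq]
          calc ‖(1:ℂ) - Complex.exp (Complex.I * ((inner ℝ ξ y : ℝ) : ℂ))‖
              ≤ ‖(1:ℂ)‖ + ‖Complex.exp (Complex.I * ((inner ℝ ξ y : ℝ) : ℂ))‖ := norm_sub_le _ _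
            _ = 2 * 1 := by
                rw [mul_comm Complex.I ((inner ℝ ξ y : ℝ) : ℂ), norm_one,
                  Complex.norm_exp_ofReal_mul_I]
                norm_num
    have hgint : Integrable (fun y : (EuclideanSpace ℝ (Fin d)) => 2 * min 1 (‖y‖^2)) ν := by
      constructor
      · exact (continuous_const.mul (continuous_const.min (continuous_norm.pow 2))).aestronglyMeasurable
      · rw [hasFiniteIntegral_iff_norm]
        have heq : ∀ y : (EuclideanSpace ℝ (Fin d)), ENNReal.ofReal ‖2 * min 1 (‖y‖^2)‖
            = 2 * ENNReal.ofReal (min 1 (‖y‖^2)) := by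
          intro y
          have hmin : (0:ℝ) ≤ min 1 (‖y‖^2) := le_min zero_le_one (sq_nonneg _)
          rw [Real.norm_eq_abs, abs_of_nonneg (by linarith), ENNReal.ofReal_mul (by norm_num)]
          norm_num
        calc ∫⁻ y, ENNReal.ofReal ‖2 * min 1 (‖y‖^2)‖ ∂ν
            = ∫⁻ y, 2 * ENNReal.ofReal (min 1 (‖y‖^2)) ∂ν := by
              exact lintegral_congr heq
          _ = 2 * ∫⁻ y, ENNReal.ofReal (min 1 (‖y‖^2)) ∂ν := by
              rw [lintegral_const_mul 2 ((measurable_const.min (measurable_norm.pow_const 2)).ennreal_ofReal)]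
          _ < ⊤ := ENNReal.mul_lt_top (by norm_num) hν
    have hFint : Integrable F ν :=
      hgint.mono' hFmeas.aestronglyMeasurable (ae_of_all _ hbound)
    -- real part of the integrand
    have hFre : ∀ y : (EuclideanSpace ℝ (Fin d)), (F y).re = 1 - Real.cos (inner ℝ ξ y : ℝ) := by
      intro y
      rw [hF_def]
      exact re_integrand _ _
    -- real part of ψ ξ
    have hψre : (ψ ξ).re = (1/2 : ℝ) * (inner ℝ ξ (Q ξ) : ℝ) + ∫ y, (F y).re ∂ν := by
      rw [hψ ξ]
      rw [Complex.add_re, Complex.add_re]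
      have h1 : (-Complex.I * ((inner ℝ ℓ ξ : ℝ) : ℂ)).re = 0 := by
        simp [Complex.mul_re]
      have h3 : (∫ y, F y ∂ν).re = ∫ y, (F y).re ∂ν := by
        have := integral_re (μ := ν) (f := F) hFint
        simpa using this.symm
      rw [h1, Complex.ofReal_re]
      rw [show (∫ y, ((1 : ℂ) - Complex.exp (Complex.I * ((inner ℝ ξ y : ℝ) : ℂ))
            + Complex.I * ((Set.indicator A (fun y => (inner ℝ ξ y : ℝ)) y : ℝ) : ℂ)) ∂ν)
          = ∫ y, F y ∂ν from rfl]
      rw [h3]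
      ring
    -- lower bound for the integral
    have hnonneg : 0 ≤ᵐ[ν] fun y => (F y).re := by
      refine ae_of_all _ (fun y => ?_)
      show (0:ℝ) ≤ (F y).re
      rw [hFre y]
      have := Real.cos_le_one (inner ℝ ξ y : ℝ)
      linarith
    have hint_lb : (c₁^2/4) * ‖ξ‖^2 * (ν B).toReal ≤ ∫ y, (F y).re ∂ν := by
      have hset : (c₁^2/4 * ‖ξ‖^2) * (ν B).toReal ≤ ∫ y in B, (F y).re ∂ν := by
        rw [show (c₁^2/4 * ‖ξ‖^2) * (ν B).toReal = ν.real B • (c₁^2/4 * ‖ξ‖^2) by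
          rw [smul_eq_mul, Measure.real_def, mul_comm]]
        apply setIntegral_ge_of_const_le hBmeas hBfin.ne
        · intro y hy
          rw [hFre y]
          have hlb := hinner_lb y hy
          have hub := hinner_ub y hy
          have hcq := cos_quad_bound (inner ℝ ξ y : ℝ) hub.le
          have hsq : (c₁ * ‖ξ‖)^2 ≤ (inner ℝ ξ y : ℝ)^2 := by
            have h0 : 0 ≤ c₁ * ‖ξ‖ := mul_nonneg hc₁pos.le hξpos.le
            nlinarith
          calc c₁^2/4 * ‖ξ‖^2 = (c₁ * ‖ξ‖)^2 / 4 := by ring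
            _ ≤ (inner ℝ ξ y : ℝ)^2 / 4 := by gcongr ?x / 4
            _ ≤ 1 - Real.cos (inner ℝ ξ y : ℝ) := hcq
        · exact hFint.re.integrableOn
      calc (c₁^2/4) * ‖ξ‖^2 * (ν B).toReal ≤ ∫ y in B, (F y).re ∂ν := hset
        _ ≤ ∫ y, (F y).re ∂ν := setIntegral_le_integral hFint.re hnonneg
    -- conclude
    have hre_lb : c * ‖ξ‖^2 ≤ (ψ ξ).re := by
      rw [hψre, hc_def]
      have := hQpos ξ
      nlinarith [hint_lb]
    have hre_le : (ψ ξ).re ≤ ‖ψ ξ‖ := by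
      exact Complex.re_le_norm _
    rw [le_div_iff₀ (by positivity)]
    linarith
  refine ⟨x₀, hx₀norm, ⟨c, hcpos, δ, hδpos, key⟩, ?_⟩
  -- Step 4: no convergence for α > 2
  intro α hα h
  have hx₀ne : x₀ ≠ 0 := by
    intro h0
    rw [h0, norm_zero] at hx₀norm
    norm_num at hx₀norm
  have hmap : Tendsto (fun s : ℝ => s • x₀) (nhdsWithin 0 (Ioi 0))
      (nhdsWithin (0:(EuclideanSpace ℝ (Fin d))) ({(0:(EuclideanSpace ℝ (Fin d)))}ᶜ)) := by
    rw [tendsto_nhdsWithin_iff]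
    constructor
    · have h1 : Tendsto (fun s : ℝ => s • x₀) (nhds 0) (nhds ((0:ℝ) • x₀)) :=
        ((continuous_id.smul continuous_const).tendsto 0)
      rw [zero_smul] at h1
      exact h1.mono_left nhdsWithin_le_nhds
    · filter_upwards [self_mem_nhdsWithin] with s hs
      exact smul_ne_zero (ne_of_gt hs) hx₀ne
  have h2 := h.comp hmap
  have hlb : ∀ᶠ s : ℝ in nhdsWithin 0 (Ioi 0),
      c ≤ ‖ψ (s • x₀)‖ / ‖s • x₀‖ ^ α := by
    filter_upwards [Ioo_mem_nhdsGT_of_mem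
      (show (0:ℝ) ∈ Ico 0 (min δ 1) from ⟨le_refl 0, lt_min hδpos one_pos⟩)] with s hs
    obtain ⟨hs0, hs1⟩ := hs
    have hsδ : s < δ := lt_of_lt_of_le hs1 (min_le_left _ _)
    have hs_le1 : s ≤ 1 := le_of_lt (lt_of_lt_of_le hs1 (min_le_right _ _))
    have hnorm : ‖s • x₀‖ = s := by
      rw [norm_smul, hx₀norm, Real.norm_eq_abs, abs_of_pos hs0, mul_one]
    have hne : s • x₀ ≠ 0 := smul_ne_zero (ne_of_gt hs0) hx₀ne
    have hconeval : co ≤ (inner ℝ x₀ (s • x₀) : ℝ) / ‖s • x₀‖ := by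
      rw [real_inner_smul_right, hnorm]
      have hxx : (inner ℝ x₀ x₀ : ℝ) = 1 := by
        rw [real_inner_self_eq_norm_mul_norm, hx₀norm]
        ring
      rw [hxx, mul_one, div_self (ne_of_gt hs0)]
      exact hco1
    have hk := key (s • x₀) hne hconeval (by rw [hnorm]; exact hsδ)
    rw [hnorm] at hk ⊢
    have hpow : s ^ α ≤ s ^ (2:ℝ) :=
      Real.rpow_le_rpow_of_exponent_ge hs0 hs_le1 (le_of_lt hα)
    have h2eq : s ^ (2:ℝ) = s ^ (2:ℕ) := by
      rw [← Real.rpow_natCast s 2]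
      norm_num
    calc c ≤ ‖ψ (s • x₀)‖ / s ^ (2:ℕ) := hk
      _ ≤ ‖ψ (s • x₀)‖ / s ^ α := by
          apply div_le_div_of_nonneg_left (norm_nonneg _) (Real.rpow_pos_of_pos hs0 α)
          rw [← h2eq]
          exact hpow
  have hub : ∀ᶠ s : ℝ in nhdsWithin 0 (Ioi 0),
      ((fun ξ : (EuclideanSpace ℝ (Fin d)) => ‖ψ ξ‖ / ‖ξ‖ ^ α) ∘ (fun s : ℝ => s • x₀)) s < c :=
    h2.eventually_lt_const hcpos
  obtain ⟨s, hls, hus⟩ := (hlb.and hub).exists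
  simp only [Function.comp] at hus
  exact absurd (lt_of_le_of_lt hls hus) (lt_irrefl c)
end

section
/- Let α, β > 0 and κ ∈ (0,1], and for t > 0 let S_t have the Gamma distribution with shape αt and rate β, i.e. P(S_t ∈ dx) = (β^{αt}/Γ(αt)) x^{αt-1} e^{-βx} 1_{(0,∞)}(x) dx. Define G(t) := E S_t^κ and H(t) := β^{-κ} · inf_{θ∈[κ,1]} (αt·Γ(θ))^{κ/θ}. Then: (i) G(t) = Γ(αt+κ)/(β^κ Γ(αt)) for all t > 0; (ii) lim_{t↓0} G(t)/H(t) = 1; and (iii) lim_{t→∞} G(t)/H(t) = 1. (In particular the bound E S_t^κ ≤ inf_{θ∈[κ,1]} [ t ∫_{(0,∞)} y^θ ν(dy) ]^{κ/θ} for the Gamma subordinator, whose Lévy measure is ν(dy) = α y^{-1} e^{-βy} 1_{(0,∞)}(y) dy with ∫ y^θ ν(dy) = α Γ(θ)/β^θ, is sharp both as t → 0 and as t → ∞.) -/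
open MeasureTheory Filter Set

/-- The κ-th moment of the Gamma(αt, β) distribution. -/
noncomputable def gammaMoment (α β κ t : ℝ) : ℝ :=
  ∫ x in Set.Ioi (0 : ℝ),
    x ^ κ * (β ^ (α * t) / Real.Gamma (α * t) * x ^ (α * t - 1) * Real.exp (-β * x))

/-- The upper bound `β^{-κ} · inf_{θ ∈ [κ,1]} (α t Γ(θ))^{κ/θ}` from the moment
estimate for subordinators of bounded variation, evaluated for the Gamma
subordinator (whose Lévy measure ν(dy) = α y⁻¹ e^{-βy} dy satisfies
∫ y^θ ν(dy) = α Γ(θ)/β^θ). -/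
noncomputable def gammaMomentBound (α β κ t : ℝ) : ℝ :=
  β ^ (-κ) * sInf ((fun θ => (α * t * Real.Gamma θ) ^ (κ / θ)) '' Set.Icc κ 1)

open Real

lemma lg_nonneg {θ : ℝ} (h0 : 0 < θ) (h1 : θ ≤ 1) : 0 ≤ Real.log (Real.Gamma θ) := by
  rcases eq_or_lt_of_le h1 with h | h
  · rw [h, Real.Gamma_one, Real.log_one]
  · have hcv := Real.convexOn_log_Gamma
    have h2θ : (0:ℝ) < 2 - θ := by linarith
    set a : ℝ := (2 - 1) / (2 - θ) with ha
    set b : ℝ := (1 - θ) / (2 - θ) with hb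
    have hab : a + b = 1 := by rw [ha, hb]; field_simp; ring
    have hapos : 0 < a := by rw [ha]; exact div_pos (by norm_num) h2θ
    have hbpos : 0 ≤ b := by rw [hb]; exact le_of_lt (div_pos (by linarith) h2θ)
    have key := hcv.2 (mem_Ioi.mpr h0) (mem_Ioi.mpr (by norm_num : (0:ℝ) < 2))
      hapos.le hbpos hab
    have hpt : a • θ + b • (2:ℝ) = 1 := by
      simp only [smul_eq_mul, ha, hb]; field_simp; ring
    rw [hpt] at key
    simp only [Function.comp_apply, Real.Gamma_one, Real.log_one, smul_eq_mul] at key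
    have hΓ2 : Real.Gamma 2 = 1 := by
      rw [(by norm_num : (2:ℝ) = 1 + 1), Real.Gamma_add_one one_ne_zero, Real.Gamma_one]; ring
    rw [hΓ2, Real.log_one, mul_zero, add_zero] at key
    nlinarith

lemma lg_anti {a θ : ℝ} (ha : 0 < a) (haθ : a ≤ θ) (h1 : θ ≤ 1) :
    Real.log (Real.Gamma θ) ≤ Real.log (Real.Gamma a) := by
  rcases eq_or_lt_of_le haθ with h | h
  · rw [h]
  rcases eq_or_lt_of_le h1 with h1' | h1'
  · rw [h1', Real.Gamma_one, Real.log_one]; exact lg_nonneg ha (le_of_lt (h.trans_le h1))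
  have hcv := Real.convexOn_log_Gamma
  have h1a : (0:ℝ) < 1 - a := by linarith
  set lam : ℝ := (1 - θ) / (1 - a) with hlam
  have hlam0 : 0 < lam := by rw [hlam]; exact div_pos (by linarith) h1a
  have hlam1 : lam < 1 := by
    rw [hlam, div_lt_one h1a]; linarith
  have key := hcv.2 (mem_Ioi.mpr ha) (mem_Ioi.mpr one_pos)
    hlam0.le (by linarith : (0:ℝ) ≤ 1 - lam) (by ring)
  have hpt : lam • a + (1 - lam) • (1:ℝ) = θ := by
    simp only [smul_eq_mul, hlam]; field_simp; ring
  rw [hpt] at key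
  simp only [Function.comp_apply, Real.Gamma_one, Real.log_one, smul_eq_mul, mul_zero,
    add_zero] at key
  have := lg_nonneg ha (by linarith)
  nlinarith

lemma lg_slope {a θ : ℝ} (ha : 0 < a) (haθ : a < θ) (h1 : θ ≤ 1) :
    Real.log (Real.Gamma a) - Real.log (Real.Gamma θ) ≤
      (θ - a) * ((Real.log (Real.Gamma (a/2)) - Real.log (Real.Gamma a)) / (a/2)) := by
  have hcv := Real.convexOn_log_Gamma
  have key := hcv.slope_mono_adjacent (mem_Ioi.mpr (by positivity : (0:ℝ) < a/2))
    (mem_Ioi.mpr (ha.trans haθ)) (by linarith) haθ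
  simp only [Function.comp_apply] at key
  have h2 : a - a/2 = a/2 := by ring
  rw [h2] at key
  have hθa : 0 < θ - a := by linarith
  have this1 := (div_le_div_iff₀ (by positivity : (0:ℝ) < a/2) hθa).mp key
  rw [← mul_div_assoc, le_div_iff₀ (by positivity : (0:ℝ) < a/2)]
  nlinarith

lemma one_le_Gamma {θ : ℝ} (h0 : 0 < θ) (h1 : θ ≤ 1) : 1 ≤ Real.Gamma θ := by
  by_contra hlt
  push_neg at hlt
  exact absurd (lg_nonneg h0 h1) (not_le.mpr (Real.log_neg (Real.Gamma_pos_of_pos h0) hlt))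

lemma moment_eq (α β κ : ℝ) (hβ : 0 < β) (hκ0 : 0 < κ) {t : ℝ} (ht : 0 < t) (hα : 0 < α) :
    gammaMoment α β κ t = Real.Gamma (α * t + κ) / (β ^ κ * Real.Gamma (α * t)) := by
  have hat : 0 < α * t := mul_pos hα ht
  have hΓ : 0 < Real.Gamma (α * t) := Real.Gamma_pos_of_pos hat
  rw [gammaMoment]
  have hcong : ∀ x ∈ Set.Ioi (0:ℝ),
      x ^ κ * (β ^ (α * t) / Real.Gamma (α * t) * x ^ (α * t - 1) * Real.exp (-β * x))
        = β ^ (α * t) / Real.Gamma (α * t) *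
            (x ^ (α * t + κ - 1) * Real.exp (-(β * x))) := by
    intro x hx
    rw [mem_Ioi] at hx
    rw [show α * t + κ - 1 = κ + (α * t - 1) by ring, Real.rpow_add hx, neg_mul]
    ring
  rw [setIntegral_congr_fun measurableSet_Ioi hcong, integral_const_mul,
    integral_rpow_mul_exp_neg_mul_Ioi (by linarith) hβ]
  rw [Real.div_rpow zero_le_one hβ.le, Real.one_rpow, Real.rpow_add hβ]
  have hbκ : (0:ℝ) < β ^ κ := Real.rpow_pos_of_pos hβ κ
  have hbat : (0:ℝ) < β ^ (α * t) := Real.rpow_pos_of_pos hβ (α * t)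
  field_simp

lemma gautschi_upper {x κ : ℝ} (hx : 0 < x) (hκ0 : 0 < κ) (hκ1 : κ ≤ 1) :
    Real.Gamma (x + κ) ≤ Real.Gamma x * x ^ κ := by
  have hΓx : 0 < Real.Gamma x := Real.Gamma_pos_of_pos hx
  have hΓxκ : 0 < Real.Gamma (x + κ) := Real.Gamma_pos_of_pos (by linarith)
  rw [← Real.log_le_log_iff hΓxκ (by positivity), Real.log_mul hΓx.ne' (by positivity),
    Real.log_rpow hx]
  have key := (Real.convexOn_log_Gamma).2 (mem_Ioi.mpr hx)
    (mem_Ioi.mpr (by linarith : (0:ℝ) < x + 1)) (by linarith : (0:ℝ) ≤ 1 - κ) hκ0.le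
    (by ring)
  have hpt : (1 - κ) • x + κ • (x + 1) = x + κ := by simp [smul_eq_mul]; ring
  rw [hpt] at key
  simp only [Function.comp_apply, smul_eq_mul] at key
  rw [Real.Gamma_add_one hx.ne', Real.log_mul hx.ne' hΓx.ne'] at key
  nlinarith

lemma gautschi_lower {x κ : ℝ} (hx : 0 < x) (hκ0 : 0 < κ) (hκ1 : κ ≤ 1) :
    (x / (x + κ)) ^ (1 - κ) * (Real.Gamma x * x ^ κ) ≤ Real.Gamma (x + κ) := by
  have hΓx : 0 < Real.Gamma x := Real.Gamma_pos_of_pos hx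
  have hxκ : (0:ℝ) < x + κ := by linarith
  have hΓxκ : 0 < Real.Gamma (x + κ) := Real.Gamma_pos_of_pos hxκ
  have hq : (0:ℝ) < x / (x + κ) := div_pos hx hxκ
  rw [← Real.log_le_log_iff (by positivity) hΓxκ,
    Real.log_mul (by positivity) (by positivity), Real.log_mul hΓx.ne' (by positivity),
    Real.log_rpow hx, Real.log_rpow hq, Real.log_div hx.ne' hxκ.ne']
  have key := (Real.convexOn_log_Gamma).2 (mem_Ioi.mpr hxκ)
    (mem_Ioi.mpr (by linarith : (0:ℝ) < x + κ + 1)) hκ0.le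
    (by linarith : (0:ℝ) ≤ 1 - κ) (by ring)
  have hpt : κ • (x + κ) + (1 - κ) • (x + κ + 1) = x + 1 := by simp [smul_eq_mul]; ring
  rw [hpt] at key
  simp only [Function.comp_apply, smul_eq_mul] at key
  rw [show x + κ + 1 = (x + κ) + 1 by ring, Real.Gamma_add_one hxκ.ne',
    Real.log_mul hxκ.ne' hΓxκ.ne'] at key
  have hG1 : Real.Gamma (x + 1) = x * Real.Gamma x := Real.Gamma_add_one hx.ne'
  rw [hG1, Real.log_mul hx.ne' hΓx.ne'] at key
  nlinarith

lemma inf_small {α κ t : ℝ} (hα : 0 < α) (hκ0 : 0 < κ) (hκ1 : κ ≤ 1) (ht : 0 < t)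
    (hL : Real.log (α * t) ≤
      -((Real.log (Real.Gamma (κ/2)) - Real.log (Real.Gamma κ)) / (κ/2)
        + Real.log (Real.Gamma κ) / κ)) :
    sInf ((fun θ => (α * t * Real.Gamma θ) ^ (κ / θ)) '' Set.Icc κ 1)
      = α * t * Real.Gamma κ := by
  have hat : 0 < α * t := mul_pos hα ht
  have hΓκ : 0 < Real.Gamma κ := Real.Gamma_pos_of_pos hκ0
  set C₁ : ℝ := (Real.log (Real.Gamma (κ/2)) - Real.log (Real.Gamma κ)) / (κ/2) with hC₁
  have hC₁0 : 0 ≤ C₁ := by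
    have := lg_anti (by positivity : (0:ℝ) < κ/2) (by linarith) hκ1
    rw [hC₁]
    have : 0 ≤ Real.log (Real.Gamma (κ/2)) - Real.log (Real.Gamma κ) := by linarith
    positivity
  have hmem : α * t * Real.Gamma κ ∈
      (fun θ => (α * t * Real.Gamma θ) ^ (κ / θ)) '' Set.Icc κ 1 := by
    refine ⟨κ, ⟨le_refl κ, hκ1⟩, ?_⟩
    dsimp only
    rw [div_self hκ0.ne', Real.rpow_one]
  have hlb : ∀ y ∈ (fun θ => (α * t * Real.Gamma θ) ^ (κ / θ)) '' Set.Icc κ 1,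
      α * t * Real.Gamma κ ≤ y := by
    rintro y ⟨θ, hθ, rfl⟩
    dsimp only
    have hθ0 : 0 < θ := lt_of_lt_of_le hκ0 hθ.1
    have hΓθ : 0 < Real.Gamma θ := Real.Gamma_pos_of_pos hθ0
    rw [Real.rpow_def_of_pos (mul_pos hat hΓθ)]
    rw [← Real.exp_log (mul_pos hat hΓκ)]
    apply Real.exp_le_exp.mpr
    rw [Real.log_mul hat.ne' hΓκ.ne', Real.log_mul hat.ne' hΓθ.ne']
    set ℓ : ℝ := Real.log (α * t) with hℓ
    set p : ℝ := Real.log (Real.Gamma κ) with hp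
    set q : ℝ := Real.log (Real.Gamma θ) with hq
    have hp0 : 0 ≤ p := lg_nonneg hκ0 hκ1
    have hq0 : 0 ≤ q := lg_nonneg hθ0 hθ.2
    have hqp : q ≤ p := lg_anti hκ0 hθ.1 hθ.2
    have hL' : κ * C₁ + p ≤ κ * (-ℓ) := by
      have h2 := mul_le_mul_of_nonneg_left hL hκ0.le
      have : κ * (C₁ + p / κ) = κ * C₁ + p := by field_simp
      nlinarith
    have hℓ0 : ℓ ≤ 0 := by nlinarith
    rcases eq_or_lt_of_le hθ.1 with h | h
    · rw [hp, hq, ← h, div_self hκ0.ne', mul_one]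
    · have hslope : p - q ≤ (θ - κ) * C₁ := lg_slope hκ0 h hθ.2
      rw [mul_div_assoc', le_div_iff₀ hθ0]
      nlinarith [mul_le_mul_of_nonneg_left hslope hκ0.le,
        mul_le_mul_of_nonneg_right hL' (le_of_lt (sub_pos.mpr h)),
        mul_nonneg (mul_nonneg (le_of_lt (sub_pos.mpr h)) (by linarith : (0:ℝ) ≤ 1 - κ))
          (neg_nonneg.mpr hℓ0)]
  exact le_antisymm (csInf_le ⟨α * t * Real.Gamma κ, hlb⟩ hmem) (le_csInf ⟨_, hmem⟩ hlb)

lemma inf_large {α κ t : ℝ} (hκ0 : 0 < κ) (hκ1 : κ ≤ 1) (h1t : 1 ≤ α * t) :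
    sInf ((fun θ => (α * t * Real.Gamma θ) ^ (κ / θ)) '' Set.Icc κ 1)
      = (α * t) ^ κ := by
  have hat : 0 < α * t := lt_of_lt_of_le one_pos h1t
  have hmem : (α * t) ^ κ ∈
      (fun θ => (α * t * Real.Gamma θ) ^ (κ / θ)) '' Set.Icc κ 1 := by
    refine ⟨1, ⟨hκ1, le_refl 1⟩, ?_⟩
    dsimp only
    rw [Real.Gamma_one, mul_one, div_one]
  have hlb : ∀ y ∈ (fun θ => (α * t * Real.Gamma θ) ^ (κ / θ)) '' Set.Icc κ 1,
      (α * t) ^ κ ≤ y := by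
    rintro y ⟨θ, hθ, rfl⟩
    dsimp only
    have hθ0 : 0 < θ := lt_of_lt_of_le hκ0 hθ.1
    have hΓθ : 1 ≤ Real.Gamma θ := one_le_Gamma hθ0 hθ.2
    have h1 : (α * t) ^ θ ≤ α * t * Real.Gamma θ := by
      calc (α * t) ^ θ ≤ (α * t) ^ (1:ℝ) :=
            Real.rpow_le_rpow_of_exponent_le h1t hθ.2
        _ = α * t := Real.rpow_one _
        _ ≤ α * t * Real.Gamma θ := le_mul_of_one_le_right hat.le hΓθ
    calc (α * t) ^ κ = (α * t) ^ (θ * (κ / θ)) := by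
          rw [mul_div_cancel₀ _ hθ0.ne']
      _ = ((α * t) ^ θ) ^ (κ / θ) := Real.rpow_mul hat.le _ _
      _ ≤ (α * t * Real.Gamma θ) ^ (κ / θ) :=
          Real.rpow_le_rpow (Real.rpow_nonneg hat.le _) h1 (by positivity)
  exact le_antisymm (csInf_le ⟨(α * t) ^ κ, hlb⟩ hmem) (le_csInf ⟨_, hmem⟩ hlb)

/-- for the Gamma subordinator the moment estimate
`E S_t^κ ≤ inf_{θ∈[κ,1]} [t ∫ y^θ ν(dy)]^{κ/θ}` is sharp both as t → 0 and as
t → ∞: (i) E S_t^κ = Γ(αt+κ)/(β^κ Γ(αt)); (ii) and (iii) the quotient of moment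
and bound tends to 1 at 0⁺ and at ∞. -/
theorem gamma_subordinator_moment_sharp
    (α β κ : ℝ) (hα : 0 < α) (hβ : 0 < β) (hκ0 : 0 < κ) (hκ1 : κ ≤ 1) :
    (∀ t > 0, gammaMoment α β κ t =
      Real.Gamma (α * t + κ) / (β ^ κ * Real.Gamma (α * t)))
    ∧ Filter.Tendsto (fun t => gammaMoment α β κ t / gammaMomentBound α β κ t)
        (nhdsWithin 0 (Set.Ioi 0)) (nhds 1)
    ∧ Filter.Tendsto (fun t => gammaMoment α β κ t / gammaMomentBound α β κ t)
        Filter.atTop (nhds 1) := by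
  have hΓκ : 0 < Real.Gamma κ := Real.Gamma_pos_of_pos hκ0
  have hβκ : (0:ℝ) < β ^ κ := Real.rpow_pos_of_pos hβ κ
  refine ⟨fun t ht => moment_eq α β κ hβ hκ0 ht hα, ?_, ?_⟩
  · -- limit at 0⁺
    set C : ℝ := (Real.log (Real.Gamma (κ/2)) - Real.log (Real.Gamma κ)) / (κ/2)
        + Real.log (Real.Gamma κ) / κ with hC
    set δ : ℝ := Real.exp (-C) / α with hδ
    have hδ0 : 0 < δ := by rw [hδ]; positivity
    have hEq : ∀ᶠ t in nhdsWithin (0:ℝ) (Set.Ioi 0),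
        gammaMoment α β κ t / gammaMomentBound α β κ t
          = Real.Gamma (α * t + κ) / (Real.Gamma (α * t + 1) * Real.Gamma κ) := by
      filter_upwards [Ioc_mem_nhdsGT_of_mem (⟨le_refl (0:ℝ), hδ0⟩ : (0:ℝ) ∈ Set.Ico 0 δ)]
        with t ht
      have ht0 : 0 < t := ht.1
      have hat : 0 < α * t := mul_pos hα ht0
      have hlog : Real.log (α * t) ≤ -C := by
        have h1 : α * t ≤ Real.exp (-C) := by
          have := mul_le_mul_of_nonneg_left ht.2 hα.le
          rwa [hδ, mul_div_cancel₀ _ hα.ne'] at this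
        calc Real.log (α * t) ≤ Real.log (Real.exp (-C)) :=
              Real.log_le_log hat h1
          _ = -C := Real.log_exp _
      rw [moment_eq α β κ hβ hκ0 ht0 hα, gammaMomentBound, inf_small hα hκ0 hκ1 ht0 hlog,
        Real.Gamma_add_one hat.ne', Real.rpow_neg hβ.le]
      have hΓat : 0 < Real.Gamma (α * t) := Real.Gamma_pos_of_pos hat
      field_simp
    have hcont : Filter.Tendsto
        (fun t : ℝ => Real.Gamma (α * t + κ) / (Real.Gamma (α * t + 1) * Real.Gamma κ))
        (nhdsWithin (0:ℝ) (Set.Ioi 0)) (nhds 1) := by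
      have hGκ : ContinuousAt Real.Gamma κ :=
        (Real.differentiableAt_Gamma (fun m => by
          have : -(m:ℝ) ≤ 0 := neg_nonpos.mpr (Nat.cast_nonneg m)
          exact ne_of_gt (lt_of_le_of_lt this hκ0))).continuousAt
      have hG1 : ContinuousAt Real.Gamma 1 :=
        (Real.differentiableAt_Gamma (fun m => by
          have : -(m:ℝ) ≤ 0 := neg_nonpos.mpr (Nat.cast_nonneg m)
          exact ne_of_gt (lt_of_le_of_lt this one_pos))).continuousAt
      have hf1 : Filter.Tendsto (fun t : ℝ => α * t + κ) (nhds 0) (nhds κ) := by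
        have : Continuous (fun t : ℝ => α * t + κ) := by continuity
        have h := this.tendsto 0
        simpa using h
      have hf2 : Filter.Tendsto (fun t : ℝ => α * t + 1) (nhds 0) (nhds 1) := by
        have : Continuous (fun t : ℝ => α * t + 1) := by continuity
        have h := this.tendsto 0
        simpa using h
      have hnum : Filter.Tendsto (fun t : ℝ => Real.Gamma (α * t + κ)) (nhds 0)
          (nhds (Real.Gamma κ)) := hGκ.tendsto.comp hf1
      have hden : Filter.Tendsto (fun t : ℝ => Real.Gamma (α * t + 1) * Real.Gamma κ)
          (nhds 0) (nhds (Real.Gamma 1 * Real.Gamma κ)) :=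
        (hG1.tendsto.comp hf2).mul tendsto_const_nhds
      have hd0 : Real.Gamma 1 * Real.Gamma κ ≠ 0 := by
        rw [Real.Gamma_one, one_mul]; exact hΓκ.ne'
      have := hnum.div hden hd0
      rw [Real.Gamma_one, one_mul, div_self hΓκ.ne'] at this
      exact this.mono_left nhdsWithin_le_nhds
    exact hcont.congr' (by filter_upwards [hEq] with t ht using ht.symm)
  · -- limit at ∞
    have hev : ∀ᶠ t in Filter.atTop, 1 ≤ α * t := by
      filter_upwards [Filter.eventually_ge_atTop (1/α)] with t ht
      rw [div_le_iff₀ hα] at ht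
      linarith
    have hEq : ∀ᶠ t in Filter.atTop,
        gammaMoment α β κ t / gammaMomentBound α β κ t
          = Real.Gamma (α * t + κ) / (Real.Gamma (α * t) * (α * t) ^ κ) := by
      filter_upwards [hev] with t h1t
      have hat : 0 < α * t := lt_of_lt_of_le one_pos h1t
      have ht0 : 0 < t := by by_contra h; push_neg at h; nlinarith
      rw [moment_eq α β κ hβ hκ0 ht0 hα, gammaMomentBound, inf_large hκ0 hκ1 h1t,
        Real.rpow_neg hβ.le]
      have hΓat : 0 < Real.Gamma (α * t) := Real.Gamma_pos_of_pos hat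
      have hatκ : (0:ℝ) < (α * t) ^ κ := Real.rpow_pos_of_pos hat κ
      field_simp
    have hlow : Filter.Tendsto (fun t : ℝ => (α * t / (α * t + κ)) ^ (1 - κ))
        Filter.atTop (nhds 1) := by
      have hxat : Filter.Tendsto (fun t : ℝ => α * t) Filter.atTop Filter.atTop :=
        Filter.Tendsto.const_mul_atTop hα Filter.tendsto_id
      have hden : Filter.Tendsto (fun t : ℝ => α * t + κ) Filter.atTop Filter.atTop :=
        Filter.tendsto_atTop_add_const_right _ κ hxat
      have h0 : Filter.Tendsto (fun t : ℝ => κ / (α * t + κ)) Filter.atTop (nhds 0) :=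
        Filter.Tendsto.div_atTop tendsto_const_nhds hden
      have hbase : Filter.Tendsto (fun t : ℝ => α * t / (α * t + κ)) Filter.atTop
          (nhds 1) := by
        have h1 : Filter.Tendsto (fun t : ℝ => 1 - κ / (α * t + κ)) Filter.atTop
            (nhds 1) := by
          have h2 := (tendsto_const_nhds (x := (1:ℝ))).sub h0
          simpa using h2
        refine h1.congr' ?_
        filter_upwards [hev] with t h1t
        have hatκ : (0:ℝ) < α * t + κ := by nlinarith
        field_simp
        ring
      have hrpow : ContinuousAt (fun x : ℝ => x ^ (1 - κ)) 1 :=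
        Real.continuousAt_rpow_const 1 (1 - κ) (Or.inl one_ne_zero)
      have := hrpow.tendsto.comp hbase
      simpa [Function.comp_def] using this
    refine tendsto_of_tendsto_of_tendsto_of_le_of_le' hlow tendsto_const_nhds
      ?_ ?_ |>.congr' (by filter_upwards [hEq] with t ht using ht.symm)
    · filter_upwards [hev] with t h1t
      have hat : 0 < α * t := lt_of_lt_of_le one_pos h1t
      have hΓat : 0 < Real.Gamma (α * t) := Real.Gamma_pos_of_pos hat
      have hatκ : (0:ℝ) < (α * t) ^ κ := Real.rpow_pos_of_pos hat κ
      rw [le_div_iff₀ (by positivity)]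
      exact gautschi_lower hat hκ0 hκ1
    · filter_upwards [hev] with t h1t
      have hat : 0 < α * t := lt_of_lt_of_le one_pos h1t
      have hΓat : 0 < Real.Gamma (α * t) := Real.Gamma_pos_of_pos hat
      have hatκ : (0:ℝ) < (α * t) ^ κ := Real.rpow_pos_of_pos hat κ
      rw [div_le_one (by positivity)]
      exact gautschi_upper hat hκ0 hκ1
end
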